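/- arXiv:math/9710218 — 6 statements merged into one kernel-verified Lean document; each statement's English description precedes it below -/
import Mathlib

section
/- The set CUB $= \{\eta \in {}^{\kappa}2 : \exists C \subseteq \kappa$ closed unbounded such that $\eta(i) = 1$ for all $i \in C\}$ is not meager in ${}^{\kappa}2$. -/
open Cardinal Set

noncomputable section

/-- The basic open set `[ν]` determined by a pattern `ν` of length `β`:
all `η` agreeing with `ν` below `β`. -/
def cyl (β : Ordinal.{0}) (ν : Ordinal.{0} → Bool) : Set (Ordinal.{0} → Bool) :=
  {η | ∀ i < β, η i = ν i}

/-- `A` is nowhere dense in `^κ2`: every `ν ∈ ^{<κ}2` has an extension `η`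
whose basic open set avoids `A`. -/
def Nwd (κ : Cardinal.{0}) (A : Set (Ordinal.{0} → Bool)) : Prop :=
  ∀ β < κ.ord, ∀ ν : Ordinal.{0} → Bool,
    ∃ γ, γ < κ.ord ∧ β ≤ γ ∧ ∃ η : Ordinal.{0} → Bool,
      (∀ i < β, η i = ν i) ∧ cyl γ η ∩ A = ∅

/-- `A` is meager in `^κ2`: covered by a union of `κ` many nowhere dense sets. -/
def MeagerB (κ : Cardinal.{0}) (A : Set (Ordinal.{0} → Bool)) : Prop :=
  ∃ R : Ordinal.{0} → Set (Ordinal.{0} → Bool),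
    (∀ ξ < κ.ord, Nwd κ (R ξ)) ∧ A ⊆ ⋃ ξ ∈ Set.Iio κ.ord, R ξ

/-- `A` is open in the bounded topology on `^κ2`. -/
def IsOpenB (κ : Cardinal.{0}) (A : Set (Ordinal.{0} → Bool)) : Prop :=
  ∀ η ∈ A, ∃ i < κ.ord, cyl i η ⊆ A

/-- `C` is a closed unbounded subset of (the ordinals below) `o`. -/
def ClubIn (o : Ordinal.{0}) (C : Set Ordinal.{0}) : Prop :=
  C ⊆ Set.Iio o ∧ (∀ β < o, ∃ γ ∈ C, β ≤ γ) ∧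
    (∀ S : Set Ordinal.{0}, S ⊆ C → S.Nonempty → sSup S < o → sSup S ∈ C)

/-- CUB: the set of `η ∈ ^κ2` taking value 1 on some club of `κ`. -/
def CUB (κ : Cardinal.{0}) : Set (Ordinal.{0} → Bool) :=
  {η | ∃ C : Set Ordinal.{0}, ClubIn κ.ord C ∧ ∀ i ∈ C, η i = true}

/-- `A ⊆ ^κ2` has strong measure zero. -/
def SMZ (κ : Cardinal.{0}) (A : Set (Ordinal.{0} → Bool)) : Prop :=
  ∀ X : Set Ordinal.{0}, X ⊆ Set.Iio κ.ord → #X = Cardinal.lift.{1} κ →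
    ∃ f : Ordinal.{0} → (Ordinal.{0} → Bool), A ⊆ ⋃ ξ ∈ X, cyl ξ (f ξ)

/-- `f <*_κ g` on the index set `X`: `|{i ∈ X : f i ≥ g i}| < κ`. -/
def LtStarOn (κ : Cardinal.{0}) (X : Set Ordinal.{0}) (f g : Ordinal.{0} → Ordinal.{0}) : Prop :=
  #{i : Ordinal | i ∈ X ∧ g i ≤ f i} < Cardinal.lift.{1} κ

/-- `f <*_κ g` on all of `κ`. -/
def LtStar (κ : Cardinal.{0}) (f g : Ordinal.{0} → Ordinal.{0}) : Prop :=
  LtStarOn κ (Set.Iio κ.ord) f g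

/-- `f` maps ordinals below `κ` to ordinals below `κ`, i.e. `f ∈ ^κκ`. -/
def IntoKappa (κ : Cardinal.{0}) (f : Ordinal.{0} → Ordinal.{0}) : Prop :=
  ∀ i < κ.ord, f i < κ.ord

/-- `F ⊆ ^κκ` is `<*`-bounded. -/
def BoundedFam (κ : Cardinal.{0}) (F : Set (Ordinal.{0} → Ordinal.{0})) : Prop :=
  ∃ g, IntoKappa κ g ∧ ∀ f ∈ F, LtStar κ f g

/-- `F ⊆ ^κκ` is dominating. -/
def DominatingFam (κ : Cardinal.{0}) (F : Set (Ordinal.{0} → Ordinal.{0})) : Prop :=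
  ∀ g, IntoKappa κ g → ∃ f ∈ F, LtStar κ g f

/-- A coding family: for each `i < κ`, `F i` is an injection of `^i2` into `κ`
(it depends only on, and is injective on, restrictions to `i`). -/
def CodingOK (κ : Cardinal.{0}) (F : Ordinal.{0} → (Ordinal.{0} → Bool) → Ordinal.{0}) : Prop :=
  (∀ i < κ.ord, ∀ ν : Ordinal.{0} → Bool, F i ν < κ.ord) ∧
  (∀ i : Ordinal.{0}, ∀ ν ν' : Ordinal.{0} → Bool, (∀ j < i, ν j = ν' j) → F i ν = F i ν') ∧
  (∀ i < κ.ord, ∀ ν ν' : Ordinal.{0} → Bool, F i ν = F i ν' → ∀ j < i, ν j = ν' j)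

/-- `g` (restricted to domain `β`) is a strictly increasing continuous sequence
of ordinals below `κ`. -/
def SIC (κ : Cardinal.{0}) (β : Ordinal.{0}) (g : Ordinal.{0} → Ordinal.{0}) : Prop :=
  (∀ i < β, g i < κ.ord) ∧
  (∀ i j, i < j → j < β → g i < g j) ∧
  (∀ δ, δ < β → Order.IsSuccLimit δ → g δ = sSup (g '' Set.Iio δ))

/-- The open sets `A_ν` of the generalized Souslin representation of CUB:
if `ν` (of length `β`) is strictly increasing and continuous then
`A_ν = {η : ∀ i ∈ dom ν, η (ν i) = 1}`, and `A_ν = ∅` otherwise. -/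
def ANu (κ : Cardinal.{0}) (β : Ordinal.{0}) (g : Ordinal.{0} → Ordinal.{0}) : Set (Ordinal.{0} → Bool) :=
  {η | SIC κ β g ∧ ∀ i < β, η (g i) = true}

/-- The property of Baire in `^κ2` with the bounded topology. -/
def BaireProp (κ : Cardinal.{0}) (A : Set (Ordinal.{0} → Bool)) : Prop :=
  ∃ O, IsOpenB κ O ∧ MeagerB κ ((O \ A) ∪ (A \ O))


open scoped Classical in
noncomputable def seqCNM (κ : Cardinal.{0}) (R : Ordinal.{0} → Set (Ordinal.{0} → Bool)) :
    Ordinal.{0} → Ordinal.{0} × (Ordinal.{0} → Bool) := fun ξ =>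
  Ordinal.limitRecOn ξ (⟨0, fun _ => false⟩)
    (fun ζ p =>
      if h : Nwd κ (R ζ) ∧ p.1 + 1 < κ.ord then
        ⟨(h.1 (p.1 + 1) h.2 (fun i => if i < p.1 then p.2 i else true)).choose,
         (h.1 (p.1 + 1) h.2 (fun i => if i < p.1 then p.2 i else true)).choose_spec.2.2.choose⟩
      else p)
    (fun δ _ IH =>
      ⟨sSup {x | ∃ ρ, ∃ hρ : ρ < δ, x = (IH ρ hρ).1},
       fun i => if ∃ ρ, ∃ hρ : ρ < δ, i < (IH ρ hρ).1 ∧ (IH ρ hρ).2 i = true then true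
         else false⟩)

lemma seqCNM_zero (κ : Cardinal.{0}) (R : Ordinal.{0} → Set (Ordinal.{0} → Bool)) :
    seqCNM κ R 0 = ⟨0, fun _ => false⟩ := by
  unfold seqCNM; rw [Ordinal.limitRecOn_zero]

open scoped Classical in
lemma seqCNM_limit (κ : Cardinal.{0}) (R : Ordinal.{0} → Set (Ordinal.{0} → Bool))
    {ξ : Ordinal.{0}} (h : Order.IsSuccLimit ξ) :
    seqCNM κ R ξ = ⟨sSup {x | ∃ ρ, ∃ _ : ρ < ξ, x = (seqCNM κ R ρ).1},
      fun i => if ∃ ρ, ∃ hρ : ρ < ξ, i < (seqCNM κ R ρ).1 ∧ (seqCNM κ R ρ).2 i = true then true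
        else false⟩ := by
  unfold seqCNM; rw [Ordinal.limitRecOn_limit _ _ _ _ h]

lemma seqCNM_succ_spec (κ : Cardinal.{0}) (R : Ordinal.{0} → Set (Ordinal.{0} → Bool))
    (ζ : Ordinal.{0}) (h1 : Nwd κ (R ζ)) (h2 : (seqCNM κ R ζ).1 + 1 < κ.ord) :
    (seqCNM κ R (ζ + 1)).1 < κ.ord ∧ (seqCNM κ R ζ).1 + 1 ≤ (seqCNM κ R (ζ + 1)).1 ∧
    (∀ i < (seqCNM κ R ζ).1 + 1, (seqCNM κ R (ζ + 1)).2 i =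
        (if i < (seqCNM κ R ζ).1 then (seqCNM κ R ζ).2 i else true)) ∧
    cyl (seqCNM κ R (ζ + 1)).1 (seqCNM κ R (ζ + 1)).2 ∩ R ζ = ∅ := by
  classical
  have e : seqCNM κ R (ζ + 1) =
      (if h : Nwd κ (R ζ) ∧ (seqCNM κ R ζ).1 + 1 < κ.ord then
        ⟨(h.1 ((seqCNM κ R ζ).1 + 1) h.2
            (fun i => if i < (seqCNM κ R ζ).1 then (seqCNM κ R ζ).2 i else true)).choose,
         (h.1 ((seqCNM κ R ζ).1 + 1) h.2
            (fun i => if i < (seqCNM κ R ζ).1 then (seqCNM κ R ζ).2 i else true)).choose_spec.2.2.choose⟩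
      else seqCNM κ R ζ) := by
    conv_lhs => unfold seqCNM
    rw [Ordinal.add_one_eq_succ, Ordinal.limitRecOn_succ]
    rfl
  rw [e, dif_pos ⟨h1, h2⟩]
  have E := (h1 ((seqCNM κ R ζ).1 + 1) h2
      (fun i => if i < (seqCNM κ R ζ).1 then (seqCNM κ R ζ).2 i else true))
  exact ⟨E.choose_spec.1, E.choose_spec.2.1, E.choose_spec.2.2.choose_spec.1,
    E.choose_spec.2.2.choose_spec.2⟩

/-- Main invariants of the recursion. -/
lemma seqCNM_inv (κ : Cardinal.{0}) (hreg : κ.IsRegular)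
    (R : Ordinal.{0} → Set (Ordinal.{0} → Bool)) (hnwd : ∀ ξ < κ.ord, Nwd κ (R ξ)) :
    ∀ ξ ≤ κ.ord,
      (seqCNM κ R ξ).1 ≤ κ.ord ∧ (ξ < κ.ord → (seqCNM κ R ξ).1 < κ.ord) ∧
      ξ ≤ (seqCNM κ R ξ).1 ∧
      ∀ ζ ≤ ξ, (seqCNM κ R ζ).1 ≤ (seqCNM κ R ξ).1 ∧
        ∀ i < (seqCNM κ R ζ).1, (seqCNM κ R ξ).2 i = (seqCNM κ R ζ).2 i := by
  classical
  have hordlim : Order.IsSuccLimit κ.ord := Cardinal.isSuccLimit_ord hreg.aleph0_le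
  intro ξ
  induction ξ using Ordinal.induction with
  | h ξ IH =>
    intro hξ
    rcases Ordinal.zero_or_succ_or_isSuccLimit ξ with h0 | ⟨α, rfl⟩ | hlim
    · subst h0
      rw [seqCNM_zero]
      refine ⟨zero_le, fun _ => hreg.ord_pos, le_refl _, fun ζ hζ => ?_⟩
      have : ζ = 0 := le_antisymm hζ (zero_le (a := ζ))
      subst this
      rw [seqCNM_zero]
      exact ⟨le_refl _, fun i _ => rfl⟩
    · -- successor case
      rw [← Ordinal.add_one_eq_succ] at *
      have hα : α < α + 1 := by
        rw [Ordinal.add_one_eq_succ]; exact Order.lt_succ α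
      have hακ : α < κ.ord := lt_of_lt_of_le hα hξ
      obtain ⟨hb1, hb2, hb3, hb4⟩ := IH α hα hακ.le
      have hbκ : (seqCNM κ R α).1 < κ.ord := hb2 hακ
      have hbsκ : (seqCNM κ R α).1 + 1 < κ.ord := by
        rw [Ordinal.add_one_eq_succ]; exact hordlim.succ_lt hbκ
      obtain ⟨s1, s2, s3, _⟩ := seqCNM_succ_spec κ R α (hnwd α hακ) hbsκ
      have hmono : (seqCNM κ R α).1 < (seqCNM κ R (α + 1)).1 := by
        calc (seqCNM κ R α).1 < (seqCNM κ R α).1 + 1 := by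
              rw [Ordinal.add_one_eq_succ]; exact Order.lt_succ _
          _ ≤ _ := s2
      refine ⟨s1.le, fun _ => s1, ?_, ?_⟩
      · calc α + 1 ≤ (seqCNM κ R α).1 + 1 := by
              rw [Ordinal.add_one_eq_succ, Ordinal.add_one_eq_succ]
              exact Order.succ_le_succ hb3
          _ ≤ _ := s2
      · intro ζ hζ
        rcases eq_or_lt_of_le hζ with rfl | hζlt
        · exact ⟨le_refl _, fun i _ => rfl⟩
        · have hζα : ζ ≤ α := by
            rw [Ordinal.add_one_eq_succ] at hζlt
            exact Order.lt_succ_iff.mp hζlt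
          obtain ⟨hc1, hc2⟩ := hb4 ζ hζα
          refine ⟨hc1.trans hmono.le, fun i hi => ?_⟩
          have hiα : i < (seqCNM κ R α).1 := lt_of_lt_of_le hi hc1
          have hisucc : i < (seqCNM κ R α).1 + 1 :=
            hiα.trans (by rw [Ordinal.add_one_eq_succ]; exact Order.lt_succ _)
          rw [s3 i hisucc, if_pos hiα, hc2 i hi]
    · -- limit case
      rw [seqCNM_limit κ R hlim]
      set S : Set Ordinal.{0} := {x | ∃ ρ, ∃ _ : ρ < ξ, x = (seqCNM κ R ρ).1} with hS
      have hSne : S.Nonempty := ⟨(seqCNM κ R 0).1, 0, hlim.pos, rfl⟩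
      have hSbdd : ∀ x ∈ S, x ≤ κ.ord := by
        rintro x ⟨ρ, hρ, rfl⟩
        exact (IH ρ hρ (hρ.le.trans hξ)).1
      have hbdd : BddAbove S := ⟨κ.ord, hSbdd⟩
      have hle : sSup S ≤ κ.ord := csSup_le hSne hSbdd
      have hmem : ∀ ρ, ρ < ξ → (seqCNM κ R ρ).1 ≤ sSup S := fun ρ hρ =>
        le_csSup hbdd ⟨ρ, hρ, rfl⟩
      have hltκ : ξ < κ.ord → sSup S < κ.ord := by
        intro hξκ
        have : sSup S ≤ Ordinal.bsup ξ (fun ρ _ => (seqCNM κ R ρ).1) := by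
          apply csSup_le hSne
          rintro x ⟨ρ, hρ, rfl⟩
          exact Ordinal.le_bsup _ ρ hρ
        refine lt_of_le_of_lt this ?_
        apply Cardinal.bsup_lt_ord_of_isRegular hreg (Cardinal.lt_ord.mp hξκ)
        intro i hi
        exact (IH i hi (hi.le.trans hξ)).2.1 (hi.trans hξκ)
      have hgei : ξ ≤ sSup S := by
        by_contra hcon
        push_neg at hcon
        have h1 : sSup S + 1 < ξ := by
          rw [Ordinal.add_one_eq_succ]; exact hlim.succ_lt hcon
        have := hmem _ h1
        have h2 : sSup S + 1 ≤ (seqCNM κ R (sSup S + 1)).1 :=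
          (IH _ h1 (h1.le.trans hξ)).2.2.1
        have : sSup S + 1 ≤ sSup S := h2.trans (hmem _ h1)
        exact absurd this (by rw [Ordinal.add_one_eq_succ]; exact (Order.lt_succ _).not_ge)
      refine ⟨hle, hltκ, hgei, ?_⟩
      intro ζ hζ
      rcases eq_or_lt_of_le hζ with rfl | hζlt
      · -- ζ = ξ : but then LHS = itself; need to show the rewritten form agrees... careful
        exact ⟨le_of_eq (by rw [seqCNM_limit κ R hlim]),
          fun i _ => by conv_rhs => rw [seqCNM_limit κ R hlim]⟩
      · constructor
        · exact hmem ζ hζlt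
        · intro i hi
          simp only
          by_cases hv : (seqCNM κ R ζ).2 i = true
          · rw [if_pos ⟨ζ, hζlt, hi, hv⟩, hv]
          · have hfalse : (seqCNM κ R ζ).2 i = false := Bool.eq_false_iff.mpr hv
            rw [hfalse, if_neg]
            rintro ⟨ρ, hρ, hiρ, htrue⟩
            rcases le_total ρ ζ with hle' | hle'
            · have := (IH ζ hζlt (hζlt.le.trans hξ)).2.2.2 ρ hle'
              rw [this.2 i hiρ] at hv
              exact hv htrue
            · have := (IH ρ hρ (hρ.le.trans hξ)).2.2.2 ζ hle'
              rw [this.2 i hi] at htrue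
              exact hv htrue

/-- the set CUB is not meager in `^κ2`. -/
theorem CUB_not_meager (κ : Cardinal.{0}) (hreg : κ.IsRegular) (hκ : ℵ₀ < κ) :
    ¬ MeagerB κ (CUB κ) := by
  rintro ⟨R, hnwd, hcov⟩
  classical
  have hordlim : Order.IsSuccLimit κ.ord := Cardinal.isSuccLimit_ord hreg.aleph0_le
  have inv := seqCNM_inv κ hreg R hnwd
  set b : Ordinal.{0} → Ordinal.{0} := fun ξ => (seqCNM κ R ξ).1 with hbdef
  set e : Ordinal.{0} → Ordinal.{0} → Bool := fun ξ => (seqCNM κ R ξ).2 with hedef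
  have hbκ : ∀ ξ < κ.ord, b ξ < κ.ord := fun ξ h => (inv ξ h.le).2.1 h
  have hmono : ∀ ζ ξ, ζ ≤ ξ → ξ ≤ κ.ord → b ζ ≤ b ξ :=
    fun ζ ξ h hk => ((inv ξ hk).2.2.2 ζ h).1
  have hcoh : ∀ ζ ξ, ζ ≤ ξ → ξ ≤ κ.ord → ∀ i < b ζ, e ξ i = e ζ i :=
    fun ζ ξ h hk => ((inv ξ hk).2.2.2 ζ h).2
  have hgei : ∀ ξ ≤ κ.ord, ξ ≤ b ξ := fun ξ h => (inv ξ h).2.2.1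
  have hsucc : ∀ ζ < κ.ord, b ζ + 1 ≤ b (ζ + 1) ∧ e (ζ + 1) (b ζ) = true ∧
      cyl (b (ζ + 1)) (e (ζ + 1)) ∩ R ζ = ∅ := by
    intro ζ hζ
    have hbsκ : b ζ + 1 < κ.ord := by
      rw [Ordinal.add_one_eq_succ]; exact hordlim.succ_lt (hbκ ζ hζ)
    obtain ⟨s1, s2, s3, s4⟩ := seqCNM_succ_spec κ R ζ (hnwd ζ hζ) hbsκ
    refine ⟨s2, ?_, s4⟩
    have := s3 (b ζ) (by rw [Ordinal.add_one_eq_succ]; exact Order.lt_succ _)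
    rwa [if_neg (lt_irrefl _)] at this
  have hstrict : ∀ ζ < κ.ord, b ζ < b (ζ + 1) := fun ζ h =>
    lt_of_lt_of_le (by rw [Ordinal.add_one_eq_succ]; exact Order.lt_succ _) (hsucc ζ h).1
  have hsle : ∀ ζ < κ.ord, ζ + 1 ≤ κ.ord := by
    intro ζ h; rw [Ordinal.add_one_eq_succ]; exact (hordlim.succ_lt h).le
  set η : Ordinal.{0} → Bool := e κ.ord with hηdef
  -- η avoids every R ζ
  have hnotin : ∀ ζ < κ.ord, η ∉ R ζ := by
    intro ζ hζ hmem
    have hcylmem : η ∈ cyl (b (ζ + 1)) (e (ζ + 1)) :=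
      fun i hi => hcoh (ζ + 1) κ.ord (hsle ζ hζ) le_rfl i hi
    have : η ∈ cyl (b (ζ + 1)) (e (ζ + 1)) ∩ R ζ := ⟨hcylmem, hmem⟩
    rw [(hsucc ζ hζ).2.2] at this
    exact this
  -- η ∈ CUB κ via the club C = range of b below κ.ord
  set C : Set Ordinal.{0} := b '' Set.Iio κ.ord with hCdef
  have hSsub : C ⊆ Set.Iio κ.ord := by
    rintro x ⟨ζ, hζ, rfl⟩; exact hbκ ζ hζ
  have hCbdd : ∀ s ∈ C, s ≤ κ.ord := fun s hs => (hSsub hs).le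
  have hηCUB : η ∈ CUB κ := by
    refine ⟨C, ⟨hSsub, ?_, ?_⟩, ?_⟩
    · intro β hβ
      exact ⟨b β, ⟨β, hβ, rfl⟩, hgei β hβ.le⟩
    · -- closure
      intro S hSC hSne hSlt
      set I : Set Ordinal.{0} := {ζ | ζ < κ.ord ∧ b ζ ∈ S} with hIdef
      have hbddS : BddAbove S := ⟨κ.ord, fun s hs => hCbdd s (hSC hs)⟩
      have hIS : ∀ s ∈ S, ∃ ζ ∈ I, b ζ = s := by
        intro s hs
        obtain ⟨ζ, hζ, rfl⟩ := hSC hs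
        exact ⟨ζ, ⟨hζ, hs⟩, rfl⟩
      have hIne : I.Nonempty := by
        obtain ⟨s, hs⟩ := hSne
        obtain ⟨ζ, hζ, _⟩ := hIS s hs
        exact ⟨ζ, hζ⟩
      have hIub : ∀ ζ ∈ I, ζ ≤ sSup S := fun ζ hζ =>
        (hgei ζ hζ.1.le).trans (le_csSup hbddS hζ.2)
      have hIbdd : BddAbove I := ⟨sSup S, hIub⟩
      set δ : Ordinal.{0} := sSup I with hδdef
      have hδκ : δ < κ.ord := lt_of_le_of_lt (csSup_le hIne hIub) hSlt
      by_cases hδI : δ ∈ I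
      · refine ⟨δ, hδκ, ?_⟩
        refine le_antisymm (le_csSup hbddS hδI.2) ?_
        apply csSup_le hSne
        intro s hs
        obtain ⟨ζ, hζ, rfl⟩ := hIS s hs
        exact hmono ζ δ (le_csSup hIbdd hζ) hδκ.le
      · -- δ is a limit ordinal
        have hδlim : Order.IsSuccLimit δ := by
          rcases Ordinal.zero_or_succ_or_isSuccLimit δ with h0 | ⟨α, hα⟩ | hl
          · exfalso
            obtain ⟨ζ, hζ⟩ := hIne
            have : ζ = 0 := le_antisymm (h0 ▸ le_csSup hIbdd hζ) (zero_le (a := ζ))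
            exact hδI (by rw [h0, ← this]; exact hζ)
          · exfalso
            have hαδ : α < δ := by rw [← hα]; exact Order.lt_succ α
            obtain ⟨ζ, hζI, hαζ⟩ := exists_lt_of_lt_csSup hIne hαδ
            have h1 : ζ ≤ δ := le_csSup hIbdd hζI
            have h2 : δ ≤ ζ := by rw [← hα]; exact Order.succ_le_of_lt hαζ
            exact hδI ((le_antisymm h1 h2) ▸ hζI)
          · exact hl
        have hbδ : b δ = sSup {x | ∃ ρ, ∃ _ : ρ < δ, x = b ρ} := by
          show (seqCNM κ R δ).1 = _
          rw [seqCNM_limit κ R hδlim]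
        have hTbdd : BddAbove {x | ∃ ρ, ∃ _ : ρ < δ, x = b ρ} := by
          refine ⟨κ.ord, ?_⟩
          rintro x ⟨ρ, hρ, rfl⟩
          exact (hbκ ρ (hρ.trans hδκ)).le
        have hTne : {x | ∃ ρ, ∃ _ : ρ < δ, x = b ρ}.Nonempty := ⟨b 0, 0, hδlim.pos, rfl⟩
        have heq : b δ = sSup S := by
          rw [hbδ]
          apply le_antisymm
          · apply csSup_le hTne
            rintro x ⟨ρ, hρ, rfl⟩
            obtain ⟨ζ, hζI, hρζ⟩ := exists_lt_of_lt_csSup hIne hρ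
            exact (hmono ρ ζ hρζ.le hζI.1.le).trans (le_csSup hbddS hζI.2)
          · apply csSup_le hSne
            intro s hs
            obtain ⟨ζ, hζI, rfl⟩ := hIS s hs
            have hζδ : ζ < δ := by
              rcases lt_or_eq_of_le (le_csSup hIbdd hζI) with h | h
              · exact h
              · exact absurd (show δ ∈ I by rw [hδdef, ← h]; exact hζI) hδI
            exact le_csSup hTbdd ⟨ζ, hζδ, rfl⟩
        exact ⟨δ, hδκ, heq.symm ▸ rfl⟩
    · -- η is true on C
      rintro i ⟨ζ, hζ, rfl⟩
      have h1 : η (b ζ) = e (ζ + 1) (b ζ) :=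
        hcoh (ζ + 1) κ.ord (hsle ζ hζ) le_rfl (b ζ) (hstrict ζ hζ)
      rw [h1, (hsucc ζ hζ).2.1]
  -- contradiction
  have := hcov hηCUB
  simp only [Set.mem_iUnion, Set.mem_Iio] at this
  obtain ⟨ξ, hξ, hmem⟩ := this
  exact hnotin ξ hξ hmem


end
end

section
/- For every nonempty basic open set $[\nu] \subseteq {}^{\kappa}2$ with $\nu \in {}^{<\kappa}2$, the set $[\nu] \setminus \mathrm{CUB}$ is not meager, where CUB is the set of $\eta \in {}^{\kappa}2$ whose value is $1$ on some club of $\kappa$. -/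
open Cardinal Set

noncomputable section

namespace BasicCUB

open Classical in
noncomputable def stg (κ : Cardinal.{0}) (β : Ordinal.{0}) (ν : Ordinal.{0} → Bool)
    (R : Ordinal.{0} → Set (Ordinal.{0} → Bool)) (hR : ∀ ξ, Nwd κ (R ξ)) :
    Ordinal.{0} → Ordinal.{0} × (Ordinal.{0} → Bool) :=
  WellFounded.fix wellFounded_lt fun ξ rec =>
    let b : Ordinal := max β (Ordinal.blsub ξ fun ζ h => (rec ζ h).1)
    let u' : Ordinal → Bool := fun i =>
      if i = b then false
      else if i < β then ν i
      else if ∃ ζ, ∃ h : ζ < ξ, i ≤ (rec ζ h).1 ∧ (rec ζ h).2 i = true then true else false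
    if h : b + 1 < κ.ord then
      ((hR ξ (b+1) h u').choose, ((hR ξ (b+1) h u').choose_spec.2.2).choose)
    else (b + 1, u')

variable (κ : Cardinal.{0}) (β : Ordinal.{0}) (ν : Ordinal.{0} → Bool)
  (R : Ordinal.{0} → Set (Ordinal.{0} → Bool)) (hR : ∀ ξ, Nwd κ (R ξ))

def gg (ξ : Ordinal.{0}) : Ordinal.{0} := (stg κ β ν R hR ξ).1

def ee (ξ : Ordinal.{0}) : Ordinal.{0} → Bool := (stg κ β ν R hR ξ).2

def bb (ξ : Ordinal.{0}) : Ordinal.{0} :=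
  max β (Ordinal.blsub ξ fun ζ _ => gg κ β ν R hR ζ)

open Classical in
def uu (ξ : Ordinal.{0}) : Ordinal.{0} → Bool := fun i =>
  if i = bb κ β ν R hR ξ then false
  else if i < β then ν i
  else if ∃ ζ, ∃ _ : ζ < ξ, i ≤ gg κ β ν R hR ζ ∧ ee κ β ν R hR ζ i = true then true else false

open Classical in
lemma stg_eq (ξ : Ordinal.{0}) :
    stg κ β ν R hR ξ =
      if h : bb κ β ν R hR ξ + 1 < κ.ord then
        ((hR ξ (bb κ β ν R hR ξ + 1) h (uu κ β ν R hR ξ)).choose,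
         ((hR ξ (bb κ β ν R hR ξ + 1) h (uu κ β ν R hR ξ)).choose_spec.2.2).choose)
      else (bb κ β ν R hR ξ + 1, uu κ β ν R hR ξ) := by
  conv_lhs => rw [stg, WellFounded.fix_eq]
  rfl

lemma prop1 (ξ : Ordinal.{0}) : bb κ β ν R hR ξ + 1 ≤ gg κ β ν R hR ξ := by
  rw [gg, stg_eq]
  split
  · exact (hR ξ _ ‹_› _).choose_spec.2.1
  · exact le_rfl

lemma prop2 (ξ : Ordinal.{0}) : ∀ i < bb κ β ν R hR ξ + 1,
    ee κ β ν R hR ξ i = uu κ β ν R hR ξ i := by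
  rw [ee, stg_eq]
  split
  · exact ((hR ξ _ ‹_› _).choose_spec.2.2).choose_spec.1
  · exact fun i _ => rfl

lemma prop3 (ξ : Ordinal.{0}) (h : bb κ β ν R hR ξ + 1 < κ.ord) :
    gg κ β ν R hR ξ < κ.ord ∧ cyl (gg κ β ν R hR ξ) (ee κ β ν R hR ξ) ∩ R ξ = ∅ := by
  rw [gg, ee, stg_eq, dif_pos h]
  exact ⟨(hR ξ _ h _).choose_spec.1, ((hR ξ _ h _).choose_spec.2.2).choose_spec.2⟩

lemma beta_le_bb (ξ : Ordinal.{0}) : β ≤ bb κ β ν R hR ξ := le_max_left _ _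

lemma gg_lt_bb {ζ ξ : Ordinal.{0}} (h : ζ < ξ) : gg κ β ν R hR ζ < bb κ β ν R hR ξ :=
  lt_of_lt_of_le (Ordinal.lt_blsub (fun ζ _ => gg κ β ν R hR ζ) ζ h) (le_max_right _ _)

lemma le_bb (ξ : Ordinal.{0}) : ξ ≤ bb κ β ν R hR ξ := by
  induction ξ using WellFoundedLT.induction with
  | ind ξ IH =>
    by_contra hc
    push_neg at hc
    have h1 : gg κ β ν R hR (bb κ β ν R hR ξ) < bb κ β ν R hR ξ := gg_lt_bb κ β ν R hR hc
    have h2 : bb κ β ν R hR (bb κ β ν R hR ξ) + 1 ≤ gg κ β ν R hR (bb κ β ν R hR ξ) :=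
      prop1 κ β ν R hR _
    have h3 := IH _ hc
    exact absurd h2 (not_le.mpr ((h1.trans_le h3).trans (Order.lt_succ _)))

lemma bb_lt_gg (ξ : Ordinal.{0}) : bb κ β ν R hR ξ < gg κ β ν R hR ξ :=
  lt_of_lt_of_le (Order.lt_succ _) (by simpa using prop1 κ β ν R hR ξ)

lemma ee_bb (ξ : Ordinal.{0}) : ee κ β ν R hR ξ (bb κ β ν R hR ξ) = false := by
  rw [prop2 κ β ν R hR ξ _ (Order.lt_succ _), uu, if_pos rfl]

lemma ee_lt_beta (ξ : Ordinal.{0}) {i : Ordinal} (hi : i < β) : ee κ β ν R hR ξ i = ν i := by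
  have hib : i < bb κ β ν R hR ξ := lt_of_lt_of_le hi (beta_le_bb κ β ν R hR ξ)
  rw [prop2 κ β ν R hR ξ _ (hib.trans (Order.lt_succ _)), uu, if_neg hib.ne, if_pos hi]

lemma coh : ∀ ξ ζ, ζ < ξ → ∀ i ≤ gg κ β ν R hR ζ, ee κ β ν R hR ξ i = ee κ β ν R hR ζ i := by
  intro ξ
  induction ξ using WellFoundedLT.induction with
  | ind ξ IH =>
    intro ζ hζ i hi
    have hib : i < bb κ β ν R hR ξ := lt_of_le_of_lt hi (gg_lt_bb κ β ν R hR hζ)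
    rw [prop2 κ β ν R hR ξ _ (hib.trans (Order.lt_succ _)), uu, if_neg hib.ne]
    by_cases hB : i < β
    · rw [if_pos hB, ee_lt_beta κ β ν R hR ζ hB]
    · rw [if_neg hB]
      by_cases hv : ee κ β ν R hR ζ i = true
      · rw [if_pos ⟨ζ, hζ, hi, hv⟩, hv]
      · rw [if_neg, eq_comm, ← Bool.not_eq_true]
        · exact hv
        rintro ⟨ζ', hζ', hi', hv'⟩
        rcases lt_trichotomy ζ' ζ with h | h | h
        · exact hv ((IH ζ hζ ζ' h i hi').trans hv')
        · exact hv (h ▸ hv')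
        · exact hv ((IH ζ' hζ' ζ h i hi).symm.trans hv')

lemma bb_lt_ord (ord_lim : Order.IsSuccLimit κ.ord) (hreg : κ.IsRegular) (hβ : β < κ.ord) :
    ∀ ξ < κ.ord, bb κ β ν R hR ξ < κ.ord := by
  intro ξ
  induction ξ using WellFoundedLT.induction with
  | ind ξ IH =>
    intro hξ
    apply max_lt hβ
    apply Cardinal.blsub_lt_ord_of_isRegular hreg (Cardinal.lt_ord.mp hξ)
    intro ζ hζ
    exact (prop3 κ β ν R hR ζ (ord_lim.add_one_lt (IH ζ hζ (hζ.trans hξ)))).1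

end BasicCUB
namespace BasicCUB
variable (κ : Cardinal.{0}) (β : Ordinal.{0}) (ν : Ordinal.{0} → Bool)
  (R : Ordinal.{0} → Set (Ordinal.{0} → Bool)) (hR : ∀ ξ, Nwd κ (R ξ))

/-- the generic real: the diagonal of the stages -/
def et (i : Ordinal.{0}) : Bool := ee κ β ν R hR i i

lemma et_agree (ξ : Ordinal.{0}) : ∀ i < gg κ β ν R hR ξ, et κ β ν R hR i = ee κ β ν R hR ξ i := by
  intro i hi
  rcases lt_trichotomy i ξ with h | h | h
  · exact (coh κ β ν R hR ξ i h i ((le_bb κ β ν R hR i).trans (bb_lt_gg κ β ν R hR i).le)).symm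
  · rw [et, h]
  · exact coh κ β ν R hR i ξ h i hi.le

lemma et_cyl : et κ β ν R hR ∈ cyl β ν := fun i hi => ee_lt_beta κ β ν R hR i hi

lemma et_zero (ξ : Ordinal.{0}) : et κ β ν R hR (bb κ β ν R hR ξ) = false :=
  (et_agree κ β ν R hR ξ _ (bb_lt_gg κ β ν R hR ξ)).trans (ee_bb κ β ν R hR ξ)

variable (hreg : κ.IsRegular) (hκ : ℵ₀ < κ) (hβ : β < κ.ord)

include hκ in
lemma ordLim : Order.IsSuccLimit κ.ord := Cardinal.isSuccLimit_ord hκ.le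

include hreg hκ hβ in
lemma et_notin {ξ : Ordinal.{0}} (hξ : ξ < κ.ord) : et κ β ν R hR ∉ R ξ := by
  intro hmem
  have hb := bb_lt_ord κ β ν R hR (ordLim κ hκ) hreg hβ ξ hξ
  obtain ⟨-, hcyl⟩ := prop3 κ β ν R hR ξ ((ordLim κ hκ).add_one_lt hb)
  exact eq_empty_iff_forall_notMem.mp hcyl (et κ β ν R hR)
    ⟨fun i hi => et_agree κ β ν R hR ξ i hi, hmem⟩

include hreg hκ hβ in
lemma et_not_CUB : et κ β ν R hR ∉ CUB κ := by
  have lim := ordLim κ hκ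
  rintro ⟨C, ⟨hCsub, hCunb, hCcl⟩, hC1⟩
  classical
  set A : Ordinal → Ordinal := fun x => if h : x < κ.ord then (hCunb x h).choose else 0 with hAdef
  have hA : ∀ x, x < κ.ord → A x ∈ C ∧ x ≤ A x := by
    intro x h
    rw [hAdef]; simp only [dif_pos h]
    exact ⟨(hCunb x h).choose_spec.1, (hCunb x h).choose_spec.2⟩
  set xs : ℕ → Ordinal := fun n => Nat.rec 0 (fun _ p => A (bb κ β ν R hR p) + 1) n with hxs
  set a : ℕ → Ordinal := fun n => A (bb κ β ν R hR (xs n)) with ha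
  have xslt : ∀ n, xs n < κ.ord := by
    intro n; induction n with
    | zero => exact lim.pos
    | succ n ih =>
      have hb := bb_lt_ord κ β ν R hR lim hreg hβ (xs n) ih
      exact lim.add_one_lt (hCsub (hA _ hb).1)
  have hblt : ∀ n, bb κ β ν R hR (xs n) < κ.ord :=
    fun n => bb_lt_ord κ β ν R hR lim hreg hβ (xs n) (xslt n)
  have haC : ∀ n, a n ∈ C := fun n => (hA _ (hblt n)).1
  have hba : ∀ n, bb κ β ν R hR (xs n) ≤ a n := fun n => (hA _ (hblt n)).2
  have haxs : ∀ n, a n < xs (n + 1) := fun n => Order.lt_succ _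
  set δ := ⨆ n, xs n with hδ
  have hδlt : δ < κ.ord := by
    apply Ordinal.iSup_lt_ord _ xslt
    rw [hreg.cof_eq, Cardinal.mk_nat]
    exact hκ
  have hxsδ : ∀ n, xs n ≤ δ := fun n => Ordinal.le_iSup xs n
  have hbdd : BddAbove (Set.range a) := Ordinal.bddAbove_range a
  have hsle : ∀ n, a n ≤ sSup (Set.range a) := fun n => le_csSup hbdd ⟨n, rfl⟩
  have h1 : sSup (Set.range a) ≤ bb κ β ν R hR δ := by
    apply csSup_le (range_nonempty a)
    rintro _ ⟨n, rfl⟩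
    have han : a n < δ := (haxs n).trans_le (hxsδ (n + 1))
    exact ((le_bb κ β ν R hR (a n)).trans_lt
      ((bb_lt_gg κ β ν R hR (a n)).trans (gg_lt_bb κ β ν R hR han))).le
  have h2 : bb κ β ν R hR δ ≤ sSup (Set.range a) := by
    apply max_le
    · exact ((beta_le_bb κ β ν R hR (xs 0)).trans (hba 0)).trans (hsle 0)
    · rw [Ordinal.blsub_le_iff]
      intro ζ hζ
      obtain ⟨n, hn⟩ := Ordinal.lt_iSup_iff.mp hζ
      exact ((gg_lt_bb κ β ν R hR hn).trans_le (hba n)).trans_le (hsle n)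
  have heq : sSup (Set.range a) = bb κ β ν R hR δ := le_antisymm h1 h2
  have hmem : bb κ β ν R hR δ ∈ C := by
    rw [← heq]
    refine hCcl _ ?_ ?_ ?_
    · rintro _ ⟨n, rfl⟩; exact haC n
    · exact ⟨a 0, 0, rfl⟩
    · rw [heq]
      exact bb_lt_ord κ β ν R hR lim hreg hβ δ hδlt
  have := hC1 _ hmem
  rw [et_zero κ β ν R hR δ] at this
  exact Bool.false_ne_true this

end BasicCUB


/-- for every nonempty basic open set `[ν] ⊆ ^κ2`, the set
`[ν] \ CUB` is not meager. -/
theorem basic_minus_CUB_not_meager (κ : Cardinal.{0}) (hreg : κ.IsRegular) (hκ : ℵ₀ < κ)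
    (β : Ordinal.{0}) (hβ : β < κ.ord) (ν : Ordinal.{0} → Bool)
    (hne : (cyl β ν).Nonempty) :
    ¬ MeagerB κ (cyl β ν \ CUB κ) := by
  rintro ⟨R, hNwd, hsub⟩
  classical
  set R' : Ordinal.{0} → Set (Ordinal.{0} → Bool) := fun ξ => if ξ < κ.ord then R ξ else ∅
    with hR'def
  have hR' : ∀ ξ, Nwd κ (R' ξ) := by
    intro ξ
    by_cases h : ξ < κ.ord
    · simpa [hR'def, h] using hNwd ξ h
    · intro b hb v
      refine ⟨b, hb, le_rfl, v, fun _ _ => rfl, ?_⟩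
      simp [hR'def, h]
  have h1 : BasicCUB.et κ β ν R' hR' ∈ cyl β ν := BasicCUB.et_cyl κ β ν R' hR'
  have h2 : BasicCUB.et κ β ν R' hR' ∉ CUB κ := BasicCUB.et_not_CUB κ β ν R' hR' hreg hκ hβ
  have hm := hsub ⟨h1, h2⟩
  simp only [mem_iUnion] at hm
  obtain ⟨ξ, hξ, hmem⟩ := hm
  have hno : BasicCUB.et κ β ν R' hR' ∉ R' ξ := BasicCUB.et_notin κ β ν R' hR' hreg hκ hβ hξ
  exact hno ((show R' ξ = R ξ from if_pos hξ) ▸ hmem)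

end
end

section
/- Let $\kappa$ be a regular uncountable cardinal. The set CUB (characteristic functions of supersets of clubs) does not have the property of Baire in ${}^{\kappa}2$: for every open set $O \subseteq {}^{\kappa}2$, the symmetric difference $(O \setminus \mathrm{CUB}) \cup (\mathrm{CUB} \setminus O)$ is not meager. -/
open Cardinal Set

noncomputable section

namespace CNBAux

attribute [local instance] Classical.propDecidable

/-- one step of the construction -/
def stepP (κ : Cardinal.{0}) (b : Bool) (A : Set (Ordinal.{0} → Bool))
    (p : Ordinal.{0} × (Ordinal.{0} → Bool)) : Ordinal.{0} × (Ordinal.{0} → Bool) :=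
  if h : ∃ γ, γ < κ.ord ∧ p.1 + 1 ≤ γ ∧ ∃ η : Ordinal.{0} → Bool,
      (∀ i < p.1 + 1, η i = (fun j => if j = p.1 then b else p.2 j) i) ∧ cyl γ η ∩ A = ∅
  then (h.choose, (h.choose_spec.2.2).choose)
  else (p.1 + 1, fun j => if j = p.1 then b else p.2 j)

lemma stepP_lt (κ : Cardinal.{0}) (b : Bool) (A : Set (Ordinal.{0} → Bool))
    (p : Ordinal.{0} × (Ordinal.{0} → Bool)) : p.1 < (stepP κ b A p).1 := by
  unfold stepP
  split
  · next h =>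
    exact lt_of_lt_of_le (Order.lt_succ p.1) (by rw [← Ordinal.add_one_eq_succ]; exact h.choose_spec.2.1)
  · exact lt_of_lt_of_le (Order.lt_succ p.1) (by rw [← Ordinal.add_one_eq_succ])

lemma stepP_agree (κ : Cardinal.{0}) (b : Bool) (A : Set (Ordinal.{0} → Bool))
    (p : Ordinal.{0} × (Ordinal.{0} → Bool)) :
    ∀ i < p.1 + 1, (stepP κ b A p).2 i = if i = p.1 then b else p.2 i := by
  intro i hi
  unfold stepP
  split
  · next h => exact (h.choose_spec.2.2).choose_spec.1 i hi
  · rfl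

lemma stepP_nwd (κ : Cardinal.{0}) (b : Bool) (A : Set (Ordinal.{0} → Bool))
    (p : Ordinal.{0} × (Ordinal.{0} → Bool)) (hA : Nwd κ A) (hκ : ℵ₀ ≤ κ) (hβ : p.1 < κ.ord) :
    (stepP κ b A p).1 < κ.ord ∧ cyl (stepP κ b A p).1 (stepP κ b A p).2 ∩ A = ∅ := by
  have hlt : p.1 + 1 < κ.ord := by
    rw [Ordinal.add_one_eq_succ]
    exact (Cardinal.isSuccLimit_ord hκ).succ_lt hβ
  have h : ∃ γ, γ < κ.ord ∧ p.1 + 1 ≤ γ ∧ ∃ η : Ordinal.{0} → Bool,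
      (∀ i < p.1 + 1, η i = (fun j => if j = p.1 then b else p.2 j) i) ∧ cyl γ η ∩ A = ∅ :=
    hA (p.1 + 1) hlt _
  unfold stepP
  rw [dif_pos h]
  exact ⟨h.choose_spec.1, (h.choose_spec.2.2).choose_spec.2⟩

/-- the transfinite recursion -/
def seq (κ : Cardinal.{0}) (R : Ordinal.{0} → Set (Ordinal.{0} → Bool)) (b : Bool)
    (β₀ : Ordinal.{0}) (ν₀ : Ordinal.{0} → Bool) : Ordinal.{0} → Ordinal.{0} × (Ordinal.{0} → Bool) :=
  fun ξ => Ordinal.limitRecOn ξ (β₀, ν₀) (fun ζ ih => stepP κ b (R ζ) ih)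
    (fun δ _ ih =>
      ( sSup {y | ∃ ξ' : Ordinal.{0}, ∃ hξ : ξ' < δ, y = (ih ξ' hξ).1},
        fun i => if h : ∃ ξ' : Ordinal.{0}, ∃ hξ : ξ' < δ, i < (ih ξ' hξ).1
          then (ih h.choose h.choose_spec.choose).2 i else false ))

variable (κ : Cardinal.{0}) (R : Ordinal.{0} → Set (Ordinal.{0} → Bool)) (b : Bool)
  (β₀ : Ordinal.{0}) (ν₀ : Ordinal.{0} → Bool)

def B (ξ : Ordinal.{0}) : Ordinal.{0} := (seq κ R b β₀ ν₀ ξ).1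
def F (ξ : Ordinal.{0}) : Ordinal.{0} → Bool := (seq κ R b β₀ ν₀ ξ).2

lemma seq_zero : seq κ R b β₀ ν₀ 0 = (β₀, ν₀) := Ordinal.limitRecOn_zero _ _ _

lemma seq_succ (ξ : Ordinal.{0}) :
    seq κ R b β₀ ν₀ (Order.succ ξ) = stepP κ b (R ξ) (seq κ R b β₀ ν₀ ξ) :=
  Ordinal.limitRecOn_succ _ _ _ _

lemma seq_limit (δ : Ordinal.{0}) (hδ : Order.IsSuccLimit δ) :
    seq κ R b β₀ ν₀ δ =
      ( sSup {y | ∃ ξ' : Ordinal.{0}, ∃ _ : ξ' < δ, y = B κ R b β₀ ν₀ ξ'},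
        fun i => if h : ∃ ξ' : Ordinal.{0}, ∃ _ : ξ' < δ, i < B κ R b β₀ ν₀ ξ'
          then F κ R b β₀ ν₀ h.choose i else false ) := by
  simp only [seq, B, F]
  rw [Ordinal.limitRecOn_limit _ _ _ _ hδ]
  rfl
lemma B_strictMono : StrictMono (B κ R b β₀ ν₀) := by
  have key : ∀ ζ ξ : Ordinal.{0}, ξ < ζ → B κ R b β₀ ν₀ ξ < B κ R b β₀ ν₀ ζ := by
    intro ζ
    induction ζ using Ordinal.limitRecOn with
    | zero => intro ξ h; exact absurd h (not_lt_of_ge (show (0:Ordinal.{0}) ≤ ξ from zero_le))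
    | add_one ζ ih =>
      rw [Ordinal.add_one_eq_succ]
      intro ξ h
      have hstep : B κ R b β₀ ν₀ ζ < B κ R b β₀ ν₀ (Order.succ ζ) := by
        have := stepP_lt κ b (R ζ) (seq κ R b β₀ ν₀ ζ)
        rw [show B κ R b β₀ ν₀ (Order.succ ζ) = (stepP κ b (R ζ) (seq κ R b β₀ ν₀ ζ)).1 from
          congrArg Prod.fst (seq_succ κ R b β₀ ν₀ ζ)]
        exact this
      rcases Order.lt_succ_iff.mp h |>.lt_or_eq with h' | h'
      · exact (ih ξ h').trans hstep
      · rw [h']; exact hstep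
    | limit δ hδ ih =>
      intro ξ h
      have hmem : B κ R b β₀ ν₀ (Order.succ ξ) ∈
          {y | ∃ ξ' : Ordinal.{0}, ∃ _ : ξ' < δ, y = B κ R b β₀ ν₀ ξ'} :=
        ⟨Order.succ ξ, hδ.succ_lt h, rfl⟩
      have hbdd : BddAbove {y | ∃ ξ' : Ordinal.{0}, ∃ _ : ξ' < δ, y = B κ R b β₀ ν₀ ξ'} := by
        have hset : {y | ∃ ξ' : Ordinal.{0}, ∃ _ : ξ' < δ, y = B κ R b β₀ ν₀ ξ'}
            = (B κ R b β₀ ν₀) '' (Set.Iio δ) := by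
          ext y; constructor
          · rintro ⟨ξ', hξ', rfl⟩; exact ⟨ξ', hξ', rfl⟩
          · rintro ⟨ξ', hξ', rfl⟩; exact ⟨ξ', hξ', rfl⟩
        rw [hset]
        exact Ordinal.bddAbove_of_small
      have hBδ : B κ R b β₀ ν₀ δ
          = sSup {y | ∃ ξ' : Ordinal.{0}, ∃ _ : ξ' < δ, y = B κ R b β₀ ν₀ ξ'} :=
        congrArg Prod.fst (seq_limit κ R b β₀ ν₀ δ hδ)
      have h1 : B κ R b β₀ ν₀ ξ < B κ R b β₀ ν₀ (Order.succ ξ) := ih (Order.succ ξ) (hδ.succ_lt h) ξ (Order.lt_succ ξ)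
      rw [hBδ]
      exact lt_of_lt_of_le h1 (le_csSup hbdd hmem)
  intro a c h; exact key c a h

lemma B_le_self (ξ : Ordinal.{0}) : ξ ≤ B κ R b β₀ ν₀ ξ :=
  (B_strictMono κ R b β₀ ν₀).le_apply

lemma coherence : ∀ ζ ξ : Ordinal.{0}, ξ ≤ ζ → ∀ i < B κ R b β₀ ν₀ ξ,
    F κ R b β₀ ν₀ ζ i = F κ R b β₀ ν₀ ξ i := by
  intro ζ
  induction ζ using Ordinal.limitRecOn with
  | zero => intro ξ h i _; rw [nonpos_iff_eq_zero.mp h]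
  | add_one ζ ih =>
    rw [Ordinal.add_one_eq_succ]
    intro ξ h i hi
    rcases h.lt_or_eq with h' | h'
    · have hξζ : ξ ≤ ζ := Order.lt_succ_iff.mp h'
      have hiζ : i < B κ R b β₀ ν₀ ζ :=
        lt_of_lt_of_le hi ((B_strictMono κ R b β₀ ν₀).monotone hξζ)
      have hF : F κ R b β₀ ν₀ (Order.succ ζ) i
          = (stepP κ b (R ζ) (seq κ R b β₀ ν₀ ζ)).2 i :=
        congrFun (congrArg Prod.snd (seq_succ κ R b β₀ ν₀ ζ)) i
      rw [hF, stepP_agree κ b (R ζ) (seq κ R b β₀ ν₀ ζ) i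
        (lt_of_lt_of_le hiζ (le_of_lt (lt_of_lt_of_le (Order.lt_succ _)
          (le_of_eq (Ordinal.add_one_eq_succ _).symm))))]
      rw [if_neg (show i ≠ (seq κ R b β₀ ν₀ ζ).1 from ne_of_lt hiζ)]
      exact ih ξ hξζ i hi
    · rw [h']
  | limit δ hδ ih =>
    intro ξ h i hi
    rcases h.lt_or_eq with h' | h'
    · have hF : F κ R b β₀ ν₀ δ i
          = if hp : ∃ ξ' : Ordinal.{0}, ∃ _ : ξ' < δ, i < B κ R b β₀ ν₀ ξ'
            then F κ R b β₀ ν₀ hp.choose i else false :=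
        congrFun (congrArg Prod.snd (seq_limit κ R b β₀ ν₀ δ hδ)) i
      have hp : ∃ ξ' : Ordinal.{0}, ∃ _ : ξ' < δ, i < B κ R b β₀ ν₀ ξ' := ⟨ξ, h', hi⟩
      rw [hF, dif_pos hp]
      obtain ⟨hp1, hp2⟩ := hp.choose_spec
      set ξ₀ := hp.choose
      have hmaxlt : max ξ ξ₀ < δ := max_lt h' hp1
      have e1 : F κ R b β₀ ν₀ (max ξ ξ₀) i = F κ R b β₀ ν₀ ξ i :=
        ih (max ξ ξ₀) hmaxlt ξ (le_max_left _ _) i hi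
      have e2 : F κ R b β₀ ν₀ (max ξ ξ₀) i = F κ R b β₀ ν₀ ξ₀ i :=
        ih (max ξ ξ₀) hmaxlt ξ₀ (le_max_right _ _) i hp2
      rw [← e2, e1]
    · rw [h']

lemma B_lt_ord (hreg : κ.IsRegular) (hβ₀ : β₀ < κ.ord)
    (hR : ∀ ξ < κ.ord, Nwd κ (R ξ)) :
    ∀ ξ < κ.ord, B κ R b β₀ ν₀ ξ < κ.ord := by
  intro ξ
  induction ξ using Ordinal.limitRecOn with
  | zero =>
    intro _
    have : B κ R b β₀ ν₀ 0 = β₀ := congrArg Prod.fst (seq_zero κ R b β₀ ν₀)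
    rw [this]; exact hβ₀
  | add_one ζ ih =>
    rw [Ordinal.add_one_eq_succ]
    intro h
    have hζ : ζ < κ.ord := lt_trans (Order.lt_succ ζ) h
    have := stepP_nwd κ b (R ζ) (seq κ R b β₀ ν₀ ζ) (hR ζ hζ) hreg.aleph0_le (ih hζ)
    have hB : B κ R b β₀ ν₀ (Order.succ ζ) = (stepP κ b (R ζ) (seq κ R b β₀ ν₀ ζ)).1 :=
      congrArg Prod.fst (seq_succ κ R b β₀ ν₀ ζ)
    rw [hB]; exact this.1
  | limit δ hδ ih =>
    intro h
    have hBδ : B κ R b β₀ ν₀ δ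
        = sSup {y | ∃ ξ' : Ordinal.{0}, ∃ _ : ξ' < δ, y = B κ R b β₀ ν₀ ξ'} :=
      congrArg Prod.fst (seq_limit κ R b β₀ ν₀ δ hδ)
    rw [hBδ]
    set g : δ.ToType → Ordinal.{0} :=
      fun x => B κ R b β₀ ν₀ ((Ordinal.ToType.mk (o := δ)).symm x).1 with hg
    have hglt : ∀ x, g x < κ.ord := by
      intro x
      have hx : (((Ordinal.ToType.mk (o := δ)).symm x) : Ordinal.{0}) < δ :=
        ((Ordinal.ToType.mk (o := δ)).symm x).2
      exact ih _ hx (lt_trans hx h)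
    have hsup : iSup g < κ.ord := by
      refine Cardinal.iSup_lt_ord_of_isRegular hreg ?_ hglt
      rw [Cardinal.mk_toType]
      exact Cardinal.lt_ord.mp h
    refine lt_of_le_of_lt (csSup_le ⟨B κ R b β₀ ν₀ 0, 0, hδ.pos, rfl⟩ ?_) hsup
    rintro y ⟨ξ', hξ', rfl⟩
    have : B κ R b β₀ ν₀ ξ' = g (Ordinal.ToType.mk (o := δ) ⟨ξ', hξ'⟩) := by
      rw [hg]; simp
    rw [this]
    exact le_ciSup (Ordinal.bddAbove_range g) _

def eta (i : Ordinal.{0}) : Bool := F κ R b β₀ ν₀ (Order.succ i) i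

lemma eta_eq (ζ i : Ordinal.{0}) (hi : i < B κ R b β₀ ν₀ ζ) :
    eta κ R b β₀ ν₀ i = F κ R b β₀ ν₀ ζ i := by
  have hi' : i < B κ R b β₀ ν₀ (Order.succ i) :=
    lt_of_le_of_lt (B_le_self κ R b β₀ ν₀ i) ((B_strictMono κ R b β₀ ν₀) (Order.lt_succ i))
  rcases le_total ζ (Order.succ i) with h | h
  · exact coherence κ R b β₀ ν₀ (Order.succ i) ζ h i hi
  · exact (coherence κ R b β₀ ν₀ ζ (Order.succ i) h i hi').symm

lemma eta_bit (ξ : Ordinal.{0}) : eta κ R b β₀ ν₀ (B κ R b β₀ ν₀ ξ) = b := by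
  have hBB : B κ R b β₀ ν₀ ξ < B κ R b β₀ ν₀ (Order.succ ξ) :=
    (B_strictMono κ R b β₀ ν₀) (Order.lt_succ ξ)
  rw [eta_eq κ R b β₀ ν₀ (Order.succ ξ) _ hBB]
  have hF : F κ R b β₀ ν₀ (Order.succ ξ) (B κ R b β₀ ν₀ ξ)
      = (stepP κ b (R ξ) (seq κ R b β₀ ν₀ ξ)).2 (B κ R b β₀ ν₀ ξ) :=
    congrFun (congrArg Prod.snd (seq_succ κ R b β₀ ν₀ ξ)) _
  rw [hF, stepP_agree κ b (R ξ) (seq κ R b β₀ ν₀ ξ) (B κ R b β₀ ν₀ ξ)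
    (lt_of_lt_of_le (Order.lt_succ _) (le_of_eq (Ordinal.add_one_eq_succ _).symm))]
  exact if_pos rfl

lemma eta_init : ∀ i < β₀, eta κ R b β₀ ν₀ i = ν₀ i := by
  intro i hi
  have h0 : B κ R b β₀ ν₀ 0 = β₀ := congrArg Prod.fst (seq_zero κ R b β₀ ν₀)
  have := eta_eq κ R b β₀ ν₀ 0 i (by rw [h0]; exact hi)
  rw [this]
  exact congrFun (congrArg Prod.snd (seq_zero κ R b β₀ ν₀)) i

lemma eta_avoid (hreg : κ.IsRegular) (hβ₀ : β₀ < κ.ord)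
    (hR : ∀ ξ < κ.ord, Nwd κ (R ξ)) :
    ∀ ξ < κ.ord, eta κ R b β₀ ν₀ ∉ R ξ := by
  intro ξ hξ hmem
  have hBξ : B κ R b β₀ ν₀ ξ < κ.ord := B_lt_ord κ R b β₀ ν₀ hreg hβ₀ hR ξ hξ
  have hdisj := (stepP_nwd κ b (R ξ) (seq κ R b β₀ ν₀ ξ) (hR ξ hξ) hreg.aleph0_le hBξ).2
  have hcyl : eta κ R b β₀ ν₀ ∈ cyl (stepP κ b (R ξ) (seq κ R b β₀ ν₀ ξ)).1
      (stepP κ b (R ξ) (seq κ R b β₀ ν₀ ξ)).2 := by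
    intro i hi
    have h1 : (stepP κ b (R ξ) (seq κ R b β₀ ν₀ ξ)).1 = B κ R b β₀ ν₀ (Order.succ ξ) :=
      (congrArg Prod.fst (seq_succ κ R b β₀ ν₀ ξ)).symm
    have h2 : (stepP κ b (R ξ) (seq κ R b β₀ ν₀ ξ)).2 i = F κ R b β₀ ν₀ (Order.succ ξ) i :=
      (congrFun (congrArg Prod.snd (seq_succ κ R b β₀ ν₀ ξ)) i).symm
    rw [h2]
    exact eta_eq κ R b β₀ ν₀ (Order.succ ξ) i (h1 ▸ hi)
  have : eta κ R b β₀ ν₀ ∈ (∅ : Set (Ordinal.{0} → Bool)) := hdisj ▸ ⟨hcyl, hmem⟩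
  exact this

lemma club_image (hreg : κ.IsRegular) (hβ₀ : β₀ < κ.ord)
    (hR : ∀ ξ < κ.ord, Nwd κ (R ξ)) :
    ClubIn κ.ord ((B κ R b β₀ ν₀) '' Set.Iio κ.ord) := by
  have hBlt := B_lt_ord κ R b β₀ ν₀ hreg hβ₀ hR
  have hmono := (B_strictMono κ R b β₀ ν₀).monotone
  refine ⟨?_, ?_, ?_⟩
  · rintro y ⟨ξ, hξ, rfl⟩; exact hBlt ξ hξ
  · intro β hβ
    exact ⟨B κ R b β₀ ν₀ β, ⟨β, hβ, rfl⟩, B_le_self κ R b β₀ ν₀ β⟩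
  · intro S hS hSne hSlt
    have hSbdd : BddAbove S := by
      haveI : Small.{0} S := small_subset hS
      exact Ordinal.bddAbove_of_small (s := S)
    set T : Set Ordinal.{0} := {ξ | ξ < κ.ord ∧ B κ R b β₀ ν₀ ξ ∈ S} with hT
    have hST : ∀ s ∈ S, ∃ ξ ∈ T, s = B κ R b β₀ ν₀ ξ := by
      intro s hs
      obtain ⟨ξ, hξ, rfl⟩ := hS hs
      exact ⟨ξ, ⟨hξ, hs⟩, rfl⟩
    have hTne : T.Nonempty := by
      obtain ⟨s, hs⟩ := hSne
      obtain ⟨ξ, hξT, _⟩ := hST s hs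
      exact ⟨ξ, hξT⟩
    have hTbdd : BddAbove T := by
      refine ⟨sSup S, fun ξ hξ => ?_⟩
      exact le_trans (B_le_self κ R b β₀ ν₀ ξ) (le_csSup hSbdd hξ.2)
    set δ := sSup T with hδdef
    have hδS : δ ≤ sSup S := csSup_le hTne fun ξ hξ =>
      le_trans (B_le_self κ R b β₀ ν₀ ξ) (le_csSup hSbdd hξ.2)
    have hδκ : δ < κ.ord := lt_of_le_of_lt hδS hSlt
    by_cases hδT : δ ∈ T
    · have h1 : sSup S ≤ B κ R b β₀ ν₀ δ := by
        refine csSup_le hSne fun s hs => ?_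
        obtain ⟨ξ, hξT, rfl⟩ := hST s hs
        exact hmono (le_csSup hTbdd hξT)
      have h2 : B κ R b β₀ ν₀ δ ≤ sSup S := le_csSup hSbdd hδT.2
      have : sSup S = B κ R b β₀ ν₀ δ := le_antisymm h1 h2
      rw [this]
      exact ⟨δ, hδκ, rfl⟩
    · -- δ ∉ T : δ is a limit and B δ = sSup S
      have hTδ : ∀ ξ ∈ T, ξ < δ := by
        intro ξ hξ
        rcases (le_csSup hTbdd hξ).lt_or_eq with h | h
        · rwa [← hδdef] at h
        · rw [← hδdef] at h; exact absurd (h ▸ hξ) hδT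
      have hunb : ∀ α < δ, ∃ t ∈ T, α < t := by
        intro α hα
        by_contra hcon
        push_neg at hcon
        exact absurd (csSup_le hTne hcon) (not_le.mpr hα)
      have hδ0 : δ ≠ 0 := by
        intro h0
        obtain ⟨t, htT⟩ := hTne
        exact absurd (h0 ▸ hTδ t htT) (not_lt_of_ge (show (0:Ordinal.{0}) ≤ t from zero_le))
      have hδlim : Order.IsSuccLimit δ := by
        refine Ordinal.isSuccLimit_iff.mpr ⟨hδ0, Order.isSuccPrelimit_iff_succ_lt.mpr fun α hα => ?_⟩
        obtain ⟨t, htT, hαt⟩ := hunb α hα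
        exact lt_of_le_of_lt (Order.succ_le_of_lt hαt) (hTδ t htT)
      have hBδ : B κ R b β₀ ν₀ δ
          = sSup {y | ∃ ξ' : Ordinal.{0}, ∃ _ : ξ' < δ, y = B κ R b β₀ ν₀ ξ'} :=
        congrArg Prod.fst (seq_limit κ R b β₀ ν₀ δ hδlim)
      have hbdd2 : BddAbove {y | ∃ ξ' : Ordinal.{0}, ∃ _ : ξ' < δ, y = B κ R b β₀ ν₀ ξ'} := by
        have hset : {y | ∃ ξ' : Ordinal.{0}, ∃ _ : ξ' < δ, y = B κ R b β₀ ν₀ ξ'}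
            = (B κ R b β₀ ν₀) '' (Set.Iio δ) := by
          ext y; constructor
          · rintro ⟨ξ', hξ', rfl⟩; exact ⟨ξ', hξ', rfl⟩
          · rintro ⟨ξ', hξ', rfl⟩; exact ⟨ξ', hξ', rfl⟩
        rw [hset]
        exact Ordinal.bddAbove_of_small
      have heq : B κ R b β₀ ν₀ δ = sSup S := by
        rw [hBδ]
        apply le_antisymm
        · refine csSup_le ⟨B κ R b β₀ ν₀ 0, 0, hδlim.pos, rfl⟩ ?_
          rintro y ⟨ξ', hξ', rfl⟩
          obtain ⟨t, htT, hξt⟩ := hunb ξ' hξ'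
          exact le_trans (hmono hξt.le) (le_csSup hSbdd htT.2)
        · refine csSup_le hSne fun s hs => ?_
          obtain ⟨ξ, hξT, rfl⟩ := hST s hs
          exact le_csSup hbdd2 ⟨ξ, hTδ ξ hξT, rfl⟩
      rw [← heq]
      exact ⟨δ, hδκ, rfl⟩

/-- the full construction lemma -/
lemma construction (hreg : κ.IsRegular) (hR : ∀ ξ < κ.ord, Nwd κ (R ξ)) (hβ₀ : β₀ < κ.ord) :
    ∃ η : Ordinal.{0} → Bool, (∀ i < β₀, η i = ν₀ i) ∧
      (∀ ξ < κ.ord, η ∉ R ξ) ∧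
      ∃ C : Set Ordinal.{0}, ClubIn κ.ord C ∧ ∀ i ∈ C, η i = b := by
  refine ⟨eta κ R b β₀ ν₀, eta_init κ R b β₀ ν₀,
    eta_avoid κ R b β₀ ν₀ hreg hβ₀ hR,
    (B κ R b β₀ ν₀) '' Set.Iio κ.ord, club_image κ R b β₀ ν₀ hreg hβ₀ hR, ?_⟩
  rintro i ⟨ξ, _, rfl⟩
  exact eta_bit κ R b β₀ ν₀ ξ

def clubNext (C : Set Ordinal.{0}) (x : Ordinal.{0}) : Ordinal.{0} :=
  if h : ∃ γ ∈ C, x ≤ γ then h.choose else 0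

lemma clubNext_spec {o : Ordinal.{0}} {C : Set Ordinal.{0}} (hC : ClubIn o C)
    {x : Ordinal.{0}} (hx : x < o) : clubNext C x ∈ C ∧ x ≤ clubNext C x := by
  have h : ∃ γ ∈ C, x ≤ γ := hC.2.1 x hx
  unfold clubNext
  rw [dif_pos h]
  exact h.choose_spec

lemma clubs_meet {κ : Cardinal.{0}} (hreg : κ.IsRegular) (hκ : ℵ₀ < κ)
    {C D : Set Ordinal.{0}} (hC : ClubIn κ.ord C) (hD : ClubIn κ.ord D) :
    ∃ x, x ∈ C ∧ x ∈ D := by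
  have hlim : Order.IsSuccLimit κ.ord := Cardinal.isSuccLimit_ord hreg.aleph0_le
  -- interleaved sequence
  set q : ℕ → Ordinal.{0} × Ordinal.{0} :=
    fun n => Nat.rec (clubNext C 0, clubNext D (clubNext C 0))
      (fun _ p => (clubNext C (p.2 + 1), clubNext D (clubNext C (p.2 + 1)))) n with hq
  have hinv : ∀ n : ℕ, (q n).1 ∈ C ∧ (q n).2 ∈ D ∧ (q n).1 ≤ (q n).2 := by
    intro n
    induction n with
    | zero =>
      have h1 := clubNext_spec hC hlim.pos
      have h2 := clubNext_spec hD (hC.1 h1.1)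
      exact ⟨h1.1, h2.1, h2.2⟩
    | succ n ih =>
      have hlt : (q n).2 + 1 < κ.ord := hlim.succ_lt (hD.1 ih.2.1)
      have h1 := clubNext_spec hC hlt
      have h2 := clubNext_spec hD (hC.1 h1.1)
      exact ⟨h1.1, h2.1, h2.2⟩
  have hstep : ∀ n : ℕ, (q n).2 + 1 ≤ (q (n+1)).1 := by
    intro n
    have hlt : (q n).2 + 1 < κ.ord := hlim.succ_lt (hD.1 (hinv n).2.1)
    exact (clubNext_spec hC hlt).2
  -- the common sup
  have hcbdd : BddAbove (range fun n : ℕ => (q n).1) := Ordinal.bddAbove_range _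
  have hdbdd : BddAbove (range fun n : ℕ => (q n).2) := Ordinal.bddAbove_range _
  have hdlt : sSup (range fun n : ℕ => (q n).2) < κ.ord := by
    have : (⨆ n : ℕ, (q n).2) < κ.ord :=
      Cardinal.iSup_lt_ord_of_isRegular hreg (by rw [Cardinal.mk_nat]; exact hκ)
        (fun n => hD.1 (hinv n).2.1)
    exact this
  have hclt : sSup (range fun n : ℕ => (q n).1) < κ.ord := by
    refine lt_of_le_of_lt (csSup_le (range_nonempty _) ?_) hdlt
    rintro y ⟨n, rfl⟩
    exact le_trans (hinv n).2.2 (le_csSup hdbdd ⟨n, rfl⟩)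
  have heq : sSup (range fun n : ℕ => (q n).1) = sSup (range fun n : ℕ => (q n).2) := by
    apply le_antisymm
    · refine csSup_le (range_nonempty _) ?_
      rintro y ⟨n, rfl⟩
      exact le_trans (hinv n).2.2 (le_csSup hdbdd ⟨n, rfl⟩)
    · refine csSup_le (range_nonempty _) ?_
      rintro y ⟨n, rfl⟩
      refine le_trans ?_ (le_csSup hcbdd ⟨n+1, rfl⟩)
      have h1 : (q n).2 < (q n).2 + 1 := by
        rw [Ordinal.add_one_eq_succ]; exact Order.lt_succ _
      exact le_of_lt (lt_of_lt_of_le h1 (hstep n))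
  have hmemC : sSup (range fun n : ℕ => (q n).1) ∈ C :=
    hC.2.2 _ (by rintro y ⟨n, rfl⟩; exact (hinv n).1) (range_nonempty _) hclt
  have hmemD : sSup (range fun n : ℕ => (q n).2) ∈ D :=
    hD.2.2 _ (by rintro y ⟨n, rfl⟩; exact (hinv n).2.1) (range_nonempty _) hdlt
  exact ⟨_, hmemC, heq ▸ hmemD⟩

end CNBAux

/-- CUB does not have the property of Baire: for every open `O`,
`(O \ CUB) ∪ (CUB \ O)` is not meager. -/
theorem CUB_not_Baire (κ : Cardinal.{0}) (hreg : κ.IsRegular) (hκ : ℵ₀ < κ) :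
    ∀ O : Set (Ordinal.{0} → Bool), IsOpenB κ O →
      ¬ MeagerB κ ((O \ CUB κ) ∪ (CUB κ \ O)) := by
  intro O hO hM
  obtain ⟨R, hR, hcov⟩ := hM
  have hord0 : (0 : Ordinal.{0}) < κ.ord := (Cardinal.isSuccLimit_ord hreg.aleph0_le).pos
  obtain ⟨η, -, hav, C, hC, hCb⟩ :=
    CNBAux.construction κ R true 0 (fun _ => false) hreg hR hord0
  have hηCUB : η ∈ CUB κ := ⟨C, hC, hCb⟩
  have hηO : η ∈ O := by
    by_contra h
    have hmem : η ∈ (O \ CUB κ) ∪ (CUB κ \ O) := Or.inr ⟨hηCUB, h⟩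
    obtain ⟨ξ, hξ, hmem'⟩ := Set.mem_iUnion₂.mp (hcov hmem)
    exact hav ξ hξ hmem'
  obtain ⟨i, hi, hsub⟩ := hO η hηO
  obtain ⟨η', hagr, hav', C', hC', hC'b⟩ :=
    CNBAux.construction κ R false i η hreg hR hi
  have hη'O : η' ∈ O := hsub (fun j hj => hagr j hj)
  have hη'nCUB : η' ∉ CUB κ := by
    rintro ⟨D, hD, hDt⟩
    obtain ⟨x, hxC', hxD⟩ := CNBAux.clubs_meet hreg hκ hC' hD
    have h1 : η' x = false := hC'b x hxC'
    have h2 : η' x = true := hDt x hxD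
    rw [h1] at h2
    exact Bool.false_ne_true h2
  have hmem : η' ∈ (O \ CUB κ) ∪ (CUB κ \ O) := Or.inl ⟨hη'O, hη'nCUB⟩
  obtain ⟨ξ, hξ, hmem'⟩ := Set.mem_iUnion₂.mp (hcov hmem)
  exact hav' ξ hξ hmem'

end
end

section
/- Let $\kappa = \kappa^{<\kappa}$ be uncountable. A set $A \subseteq {}^{\kappa}2$ has strong measure zero if and only if for every strictly increasing continuous sequence $\langle \alpha_i : i < \kappa \rangle$ of ordinals below $\kappa$ there exist sets $Y_i \subseteq {}^{\alpha_{i+1}}2$ with $|Y_i| \leq |\alpha_i|$ such that for every $\eta \in A$ there are $\kappa$ many $i < \kappa$ with $\eta \upharpoonright \alpha_{i+1} \in Y_i$. -/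
open Cardinal Set

noncomputable section

lemma kreg {κ : Cardinal.{0}} (hκ : ℵ₀ < κ) (hpow : κ ^< κ = κ) : κ.IsRegular := by
  refine ⟨hκ.le, ?_⟩
  by_contra h
  push_neg at h
  have h1 : κ < κ ^ (κ.ord.cof) := Cardinal.lt_power_cof hκ.le
  have h2 : κ ^ (κ.ord.cof) ≤ κ ^< κ := Cardinal.le_powerlt κ h
  rw [hpow] at h2
  exact absurd (h1.trans_le h2) (lt_irrefl κ)

lemma mk_Iio_ord (κ : Cardinal.{0}) : #(Set.Iio κ.ord) = Cardinal.lift.{1} κ := by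
  rw [Ordinal.mk_Iio_ordinal, Cardinal.card_ord]

lemma sSup_lt {κ : Cardinal.{0}} (hreg : κ.IsRegular) {S : Set Ordinal.{0}}
    (hS : S ⊆ Set.Iio κ.ord) (hcard : #S < Cardinal.lift.{1} κ) : sSup S < κ.ord := by
  have hpos : (0 : Ordinal) < κ.ord := by
    rw [Cardinal.lt_ord, Ordinal.card_zero]
    exact aleph0_pos.trans_le hreg.1
  rcases S.eq_empty_or_nonempty with rfl | hne
  · simpa [csSup_empty] using hpos
  · set e := Ordinal.ToType.mk (o := κ.ord) with he
    set ι := {x : (κ.ord).ToType // (e.symm x : Ordinal) ∈ S} with hι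
    have eqv : Nonempty (↥S ≃ ι) := ⟨{
      toFun := fun s => ⟨e ⟨s.1, hS s.2⟩, by simp⟩
      invFun := fun x => ⟨(e.symm x.1 : Ordinal), x.2⟩
      left_inv := fun s => by simp
      right_inv := fun x => by simp }⟩
    have hmk : #S = Cardinal.lift.{1} #ι := by
      have := Cardinal.lift_mk_eq'.2 eqv
      rwa [Cardinal.lift_id'] at this
    have hικ : #ι < κ := by
      rw [hmk] at hcard
      exact_mod_cast Cardinal.lift_lt.1 hcard
    have hsup : (⨆ x : ι, (e.symm x.1 : Ordinal)) < κ.ord :=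
      Cardinal.iSup_lt_ord_of_isRegular hreg hικ (fun x => (e.symm x.1).2)
    refine lt_of_le_of_lt (csSup_le hne fun s hs => ?_) hsup
    have hx : (e.symm (e ⟨s, hS hs⟩) : Ordinal) ∈ S := by simpa using hs
    calc s = (e.symm (e ⟨s, hS hs⟩) : Ordinal) := by simp
    _ ≤ _ := Ordinal.le_iSup (fun x : ι => (e.symm x.1 : Ordinal)) ⟨e ⟨s, hS hs⟩, hx⟩

lemma bddAboveS {κ : Cardinal.{0}} {S : Set Ordinal.{0}} (hS : S ⊆ Set.Iio κ.ord) :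
    BddAbove S := ⟨κ.ord, fun _ hx => (hS hx).le⟩

lemma mk_of_unbounded {κ : Cardinal.{0}} (hreg : κ.IsRegular) {S : Set Ordinal.{0}}
    (hS : S ⊆ Set.Iio κ.ord) (hub : ∀ b < κ.ord, ∃ i ∈ S, b ≤ i) :
    #S = Cardinal.lift.{1} κ := by
  refine le_antisymm ((Cardinal.mk_le_mk_of_subset hS).trans (mk_Iio_ord κ).le) ?_
  by_contra h
  push_neg at h
  have hsup := sSup_lt hreg hS h
  have hlim : Order.IsSuccLimit (κ.ord) := Cardinal.isSuccLimit_ord hreg.1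
  obtain ⟨i, hiS, hle⟩ := hub (sSup S + 1) (by
    rw [Ordinal.add_one_eq_succ]; exact hlim.succ_lt hsup)
  have hle2 : i ≤ sSup S := le_csSup (bddAboveS hS) hiS
  rw [Ordinal.add_one_eq_succ, Order.succ_le_iff] at hle
  exact absurd hle2 (not_le.2 hle)

lemma unbounded_of_mk_eq {κ : Cardinal.{0}} (hκ : ℵ₀ < κ) {S : Set Ordinal.{0}}
    (hS : S ⊆ Set.Iio κ.ord) (hmk : #S = Cardinal.lift.{1} κ) :
    ∀ b < κ.ord, ∃ i ∈ S, b < i := by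
  intro b hb
  by_contra h
  push_neg at h
  have hsub : S ⊆ Set.Iio (b + 1) := fun x hx => by
    rw [Set.mem_Iio, Ordinal.add_one_eq_succ, Order.lt_succ_iff]; exact h x hx
  have h2 : #S ≤ Cardinal.lift.{1} (b+1).card :=
    (Cardinal.mk_le_mk_of_subset hsub).trans_eq (Ordinal.mk_Iio_ordinal _)
  rw [hmk, Cardinal.lift_le] at h2
  have hblt : (b+1).card < κ := by
    rw [← Cardinal.lt_ord, Ordinal.add_one_eq_succ]
    exact (Cardinal.isSuccLimit_ord hκ.le).succ_lt hb
  exact absurd (h2.trans_lt hblt) (lt_irrefl κ)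

lemma mk_Ico_ord {κ : Cardinal.{0}} (hκ : ℵ₀ < κ) {j : Ordinal} (hj : j < κ.ord) :
    #(Set.Ico j κ.ord) = Cardinal.lift.{1} κ := by
  refine le_antisymm ((Cardinal.mk_le_mk_of_subset (fun x hx => hx.2)).trans (mk_Iio_ord κ).le) ?_
  by_contra h
  push_neg at h
  have h1 : #(Set.Iio j) < Cardinal.lift.{1} κ := by
    rw [Ordinal.mk_Iio_ordinal, Cardinal.lift_lt]
    exact Cardinal.lt_ord.1 hj
  have hsub : Set.Iio κ.ord ⊆ Set.Iio j ∪ Set.Ico j κ.ord := fun x hx => by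
    rcases lt_or_ge x j with h' | h'
    · exact Or.inl h'
    · exact Or.inr ⟨h', hx⟩
  have h3 : Cardinal.lift.{1} κ ≤ #(Set.Iio j) + #(Set.Ico j κ.ord) :=
    (mk_Iio_ord κ).symm.trans_le
      ((Cardinal.mk_le_mk_of_subset hsub).trans (Cardinal.mk_union_le _ _))
  exact absurd h3
    (not_le.2 (Cardinal.add_lt_of_lt (Cardinal.aleph0_le_lift.2 hκ.le) h1 h))


/-- for `κ = κ^{<κ}` uncountable, `A ⊆ ^κ2` has strong measure zero
iff for every strictly increasing continuous sequence `⟨α_i : i < κ⟩` of ordinals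
below `κ` there are `Y_i ⊆ ^{α_{i+1}}2` with `|Y_i| ≤ |α_i|` such that every
`η ∈ A` satisfies `η ↾ α_{i+1} ∈ Y_i` for `κ` many `i`. -/
theorem smz_iff_small_interval_covers (κ : Cardinal.{0}) (hκ : ℵ₀ < κ)
    (hpow : κ ^< κ = κ) (A : Set (Ordinal.{0} → Bool)) :
    SMZ κ A ↔
      ∀ α : Ordinal.{0} → Ordinal.{0}, SIC κ κ.ord α →
        ∃ Y : Ordinal.{0} → Set (Ordinal.{0} → Bool),
          (∀ i < κ.ord, #(Y i) ≤ Cardinal.lift.{1} (α i).card) ∧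
          (∀ η ∈ A,
            #{i : Ordinal.{0} | i < κ.ord ∧ ∃ y ∈ Y i, ∀ j < α (i + 1), η j = y j}
              = Cardinal.lift.{1} κ) := by
  classical
  have hreg := kreg hκ hpow
  have hlim : Order.IsSuccLimit (κ.ord) := Cardinal.isSuccLimit_ord hκ.le
  constructor
  · -- forward: SMZ → interval covers
    intro hsmz α hα
    obtain ⟨hα1, hα2, hα3⟩ := hα
    have hsucclt : ∀ i < κ.ord, i + 1 < κ.ord := fun i hi => by
      rw [Ordinal.add_one_eq_succ]; exact hlim.succ_lt hi
    have hle : ∀ i < κ.ord, i ≤ α i := by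
      intro i
      induction i using Ordinal.induction with
      | h i IH =>
        intro hi
        by_contra hcon
        push_neg at hcon
        have h1 : α i ≤ α (α i) := IH (α i) hcon (hcon.trans hi)
        have h2 : α (α i) < α i := hα2 _ _ hcon hi
        exact absurd (h1.trans_lt h2) (lt_irrefl _)
    set X : Ordinal → Set Ordinal := fun j => (fun i => α (i+1)) '' (Set.Ico j κ.ord) with hX
    have hXsub : ∀ j, X j ⊆ Set.Iio κ.ord := by
      rintro j _ ⟨i, hi, rfl⟩
      exact hα1 _ (hsucclt i hi.2)
    have hXmk : ∀ j < κ.ord, #(X j) = Cardinal.lift.{1} κ := by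
      intro j hj
      rw [hX]
      rw [Cardinal.mk_image_eq_of_injOn]
      · exact mk_Ico_ord hκ hj
      · intro a ha b hb hab
        by_contra hne
        rcases lt_or_gt_of_ne hne with h' | h'
        · have : α (a+1) < α (b+1) := hα2 _ _
            (by rw [Ordinal.add_one_eq_succ, Ordinal.add_one_eq_succ]
                exact Order.succ_lt_succ h') (hsucclt b hb.2)
          have hab' : α (a+1) = α (b+1) := hab
          rw [hab'] at this; exact absurd this (lt_irrefl _)
        · have : α (b+1) < α (a+1) := hα2 _ _
            (by rw [Ordinal.add_one_eq_succ, Ordinal.add_one_eq_succ]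
                exact Order.succ_lt_succ h') (hsucclt a ha.2)
          have hab' : α (a+1) = α (b+1) := hab
          rw [← hab'] at this; exact absurd this (lt_irrefl _)
    have hsel : ∀ j, ∃ f : Ordinal → (Ordinal → Bool), j < κ.ord →
        A ⊆ ⋃ ξ ∈ X j, cyl ξ (f ξ) := by
      intro j
      by_cases hj : j < κ.ord
      · obtain ⟨f, hf⟩ := hsmz (X j) (hXsub j) (hXmk j hj)
        exact ⟨f, fun _ => hf⟩
      · exact ⟨fun _ _ => false, fun h => absurd h hj⟩
    choose F hF using hsel
    refine ⟨fun i => (fun j => F j (α (i+1))) '' {j | Ordinal.omega0 ≤ j ∧ j ≤ i}, ?_, ?_⟩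
    · intro i hi
      show #((fun j => F j (α (i+1))) '' {j | Ordinal.omega0 ≤ j ∧ j ≤ i}) ≤
        Cardinal.lift.{1} (α i).card
      rcases lt_or_ge i Ordinal.omega0 with hiω | hiω
      · have hempty : {j | Ordinal.omega0 ≤ j ∧ j ≤ i} = ∅ := by
          ext j
          simp only [mem_setOf_eq, mem_empty_iff_false, iff_false, not_and, not_le]
          intro hj
          exact hiω.trans_le hj
        rw [hempty, Set.image_empty]
        simp
      · refine (Cardinal.mk_image_le).trans ?_
        have h1 : {j | Ordinal.omega0 ≤ j ∧ j ≤ i} ⊆ Set.Iio (i+1) := fun j hj => by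
          rw [Set.mem_Iio, Ordinal.add_one_eq_succ, Order.lt_succ_iff]; exact hj.2
        refine ((Cardinal.mk_le_mk_of_subset h1).trans_eq (Ordinal.mk_Iio_ordinal _)).trans ?_
        rw [Cardinal.lift_le]
        have hcard : (i+1).card = i.card := by
          rw [Ordinal.add_one_eq_succ, Ordinal.card_succ]
          exact Cardinal.add_one_of_aleph0_le (Ordinal.aleph0_le_card.2 hiω)
        rw [hcard]
        exact Ordinal.card_le_card (hle i hi)
    · intro η hη
      apply mk_of_unbounded hreg (fun i hi => hi.1)
      intro b hb
      have hωκ : Ordinal.omega0 < κ.ord := by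
        rw [← Cardinal.ord_aleph0]; exact Cardinal.ord_lt_ord.2 hκ
      have hjκ : max b Ordinal.omega0 < κ.ord := max_lt hb hωκ
      have hcov := hF (max b Ordinal.omega0) hjκ hη
      simp only [Set.mem_iUnion, exists_prop] at hcov
      obtain ⟨ξ, hξX, hξcyl⟩ := hcov
      obtain ⟨i, hiIco, rfl⟩ := hξX
      refine ⟨i, ⟨hiIco.2, F (max b Ordinal.omega0) (α (i+1)),
        ⟨max b Ordinal.omega0, ⟨le_max_right _ _, hiIco.1⟩, rfl⟩, hξcyl⟩,
        (le_max_left _ _).trans hiIco.1⟩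
  · -- backward: interval covers → SMZ
    intro H X hXsub hXmk
    have hnxt : ∀ β, ∃ γ, β < κ.ord →
        γ ∈ X ∧ β < γ ∧ γ < κ.ord ∧
        Cardinal.lift.{1} β.card ≤ #(X ∩ Set.Ioo β γ : Set Ordinal) := by
      intro β
      by_cases hβ : β < κ.ord
      swap
      · exact ⟨0, fun h => absurd h hβ⟩
      have hX' : #(X ∩ Set.Ioi β : Set Ordinal) = Cardinal.lift.{1} κ := by
        refine le_antisymm ((Cardinal.mk_le_mk_of_subset
          (fun x hx => hXsub hx.1)).trans (mk_Iio_ord κ).le) ?_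
        by_contra h
        push_neg at h
        have hsplit : X ⊆ (X ∩ Set.Ioi β) ∪ Set.Iio (β+1) := fun x hx => by
          rcases le_or_gt x β with h' | h'
          · exact Or.inr (by
              rw [Set.mem_Iio, Ordinal.add_one_eq_succ, Order.lt_succ_iff]; exact h')
          · exact Or.inl ⟨hx, h'⟩
        have h2 : #(Set.Iio (β+1) : Set Ordinal) < Cardinal.lift.{1} κ := by
          rw [Ordinal.mk_Iio_ordinal, Cardinal.lift_lt, ← Cardinal.lt_ord,
            Ordinal.add_one_eq_succ]
          exact hlim.succ_lt hβ
        have h3 : Cardinal.lift.{1} κ ≤ #(X ∩ Set.Ioi β : Set Ordinal) + #(Set.Iio (β+1)) := by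
          rw [← hXmk]
          exact (Cardinal.mk_le_mk_of_subset hsplit).trans (Cardinal.mk_union_le _ _)
        exact absurd h3
          (not_le.2 (Cardinal.add_lt_of_lt (Cardinal.aleph0_le_lift.2 hκ.le) h h2))
      have hScard : Cardinal.lift.{1} β.card ≤ #(X ∩ Set.Ioi β : Set Ordinal) := by
        rw [hX']
        exact Cardinal.lift_le.2 (Cardinal.lt_ord.1 hβ).le
      obtain ⟨S, hSsub, hSmk⟩ := Cardinal.le_mk_iff_exists_subset.1 hScard
      have hSIio : S ⊆ Set.Iio κ.ord := fun x hx => hXsub (hSsub hx).1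
      have hSsup : sSup S < κ.ord := sSup_lt hreg hSIio
        (by rw [hSmk, Cardinal.lift_lt]; exact Cardinal.lt_ord.1 hβ)
      obtain ⟨γ, hγ, hbγ⟩ := unbounded_of_mk_eq hκ (fun x hx => hXsub hx.1) hX'
        (max β (sSup S)) (max_lt hβ hSsup)
      refine ⟨γ, fun _ => ⟨hγ.1, (le_max_left _ _).trans_lt hbγ, hXsub hγ.1, ?_⟩⟩
      rw [← hSmk]
      refine Cardinal.mk_le_mk_of_subset fun s hs => ⟨(hSsub hs).1, (hSsub hs).2, ?_⟩
      exact (le_csSup (bddAboveS hSIio) hs).trans_lt ((le_max_right _ _).trans_lt hbγ)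
    choose nxt hnxtspec using hnxt
    set α : Ordinal → Ordinal := fun i =>
      Ordinal.limitRecOn i 0 (fun _ ih => nxt ih) (fun o _ f => Ordinal.bsup o f) with hαdef
    have hαsucc : ∀ i, α (i+1) = nxt (α i) := fun i => by
      rw [Ordinal.add_one_eq_succ]
      exact Ordinal.limitRecOn_succ ..
    have hαlim : ∀ o, Order.IsSuccLimit o → α o = Ordinal.bsup o (fun a _ => α a) :=
      fun o ho => Ordinal.limitRecOn_limit _ _ _ _ ho
    have hαbd : ∀ i, i < κ.ord → α i < κ.ord := by
      intro i
      induction i using Ordinal.limitRecOn with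
      | zero =>
        intro _
        have : α 0 = 0 := Ordinal.limitRecOn_zero ..
        rw [this, Cardinal.lt_ord, Ordinal.card_zero]
        exact aleph0_pos.trans_le hκ.le
      | add_one o ih =>
        intro h
        have ho : o < κ.ord := (Order.lt_succ o).trans h
        rw [hαsucc]
        exact (hnxtspec (α o) (ih ho)).2.2.1
      | limit o ho ih =>
        intro h
        rw [hαlim o ho]
        exact Cardinal.bsup_lt_ord_of_isRegular hreg (Cardinal.lt_ord.1 h)
          (fun a ha => ih a ha (ha.trans h))
    have hαgrow : ∀ i < κ.ord, α i < α (i+1) := fun i hi => by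
      rw [hαsucc]
      exact (hnxtspec (α i) (hαbd i hi)).2.1
    have hαmono : ∀ j, j < κ.ord → ∀ i, i < j → α i < α j := by
      intro j
      induction j using Ordinal.limitRecOn with
      | zero =>
        intro _ i hi
        exact absurd hi (zero_le (a := i)).not_gt
      | add_one o ih =>
        intro h i hi
        have ho : o < κ.ord := (Order.lt_succ o).trans h
        rw [Order.lt_add_one_iff] at hi
        rcases hi.lt_or_eq with h' | rfl
        · exact (ih ho i h').trans (hαgrow o ho)
        · exact hαgrow i ho
      | limit o ho ih =>
        intro h i hi
        have hi1 : i + 1 < o := by rw [Ordinal.add_one_eq_succ]; exact ho.succ_lt hi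
        have h2 : α (i+1) ≤ α o := by
          rw [hαlim o ho]
          exact Ordinal.le_bsup (fun a _ => α a) (i+1) hi1
        exact lt_of_lt_of_le (hαgrow i (hi.trans h)) h2
    have hSIC : SIC κ κ.ord α := by
      refine ⟨hαbd, fun i j hij hj => hαmono j hj i hij, fun δ hδκ hδ => ?_⟩
      have himg : α '' Set.Iio δ = Ordinal.brange δ (fun a _ => α a) := by
        ext x
        simp only [Set.mem_image, Set.mem_Iio, Ordinal.mem_brange]
        constructor
        · rintro ⟨i, hi, rfl⟩; exact ⟨i, hi, rfl⟩
        · rintro ⟨i, hi, rfl⟩; exact ⟨i, hi, rfl⟩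
      rw [hαlim δ hδ, himg, Ordinal.sSup_eq_bsup]
    obtain ⟨Y, hY1, hY2⟩ := H α hSIC
    have hTcard : ∀ i, i < κ.ord →
        #(Y i) ≤ #(X ∩ Set.Ioo (α i) (α (i+1)) : Set Ordinal) := by
      intro i hi
      refine (hY1 i hi).trans ?_
      rw [hαsucc]
      exact (hnxtspec (α i) (hαbd i hi)).2.2.2
    have hemb : ∀ i, ∃ e : (Ordinal → Bool) → Ordinal, i < κ.ord →
        (∀ y ∈ Y i, e y ∈ X ∧ e y ∈ Set.Ioo (α i) (α (i+1))) ∧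
        (∀ y ∈ Y i, ∀ y' ∈ Y i, e y = e y' → y = y') := by
      intro i
      by_cases hi : i < κ.ord
      · obtain ⟨E⟩ := (Cardinal.le_def _ _).1 (hTcard i hi)
        refine ⟨fun y => if h : y ∈ Y i then (E ⟨y, h⟩ : Ordinal) else 0, fun _ => ⟨?_, ?_⟩⟩
        · intro y hy
          simp only [dif_pos hy]
          exact ⟨(E ⟨y, hy⟩).2.1, (E ⟨y, hy⟩).2.2⟩
        · intro y hy y' hy' heq
          simp only [dif_pos hy, dif_pos hy'] at heq
          have h2 := E.injective (Subtype.ext heq)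
          exact congrArg Subtype.val h2
      · exact ⟨fun _ => 0, fun h => absurd h hi⟩
    choose e he using hemb
    have hdisj : ∀ i, i < κ.ord → ∀ i', i' < κ.ord → ∀ ξ : Ordinal,
        ξ ∈ Set.Ioo (α i) (α (i+1)) → ξ ∈ Set.Ioo (α i') (α (i'+1)) → i = i' := by
      intro i hi i' hi' ξ h1 h2
      by_contra hne
      rcases lt_or_gt_of_ne hne with h' | h'
      · have hle : α (i+1) ≤ α i' := by
          rcases (show i+1 ≤ i' from by
            rw [Ordinal.add_one_eq_succ]; exact Order.succ_le_of_lt h').lt_or_eq with hlt | heq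
          · exact (hαmono i' hi' _ hlt).le
          · rw [heq]
        exact absurd ((h1.2.trans_le hle).trans h2.1) (lt_irrefl ξ)
      · have hle : α (i'+1) ≤ α i := by
          rcases (show i'+1 ≤ i from by
            rw [Ordinal.add_one_eq_succ]; exact Order.succ_le_of_lt h').lt_or_eq with hlt | heq
          · exact (hαmono i hi _ hlt).le
          · rw [heq]
        exact absurd ((h2.2.trans_le hle).trans h1.1) (lt_irrefl ξ)
    have hfex : ∀ ξ : Ordinal, ∃ ν : Ordinal → Bool, ∀ i y, i < κ.ord → y ∈ Y i →
        e i y = ξ → ξ ∈ Set.Ioo (α i) (α (i+1)) → ν = y := by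
      intro ξ
      by_cases h : ∃ i y, i < κ.ord ∧ y ∈ Y i ∧ e i y = ξ ∧ ξ ∈ Set.Ioo (α i) (α (i+1))
      · obtain ⟨i0, y0, hi0, hy0, he0, hIoo0⟩ := h
        refine ⟨y0, fun i y hi hy heq hIoo => ?_⟩
        have hii : i = i0 := hdisj i hi i0 hi0 ξ hIoo hIoo0
        subst hii
        exact (he i hi).2 y0 hy0 y hy (he0.trans heq.symm)
      · exact ⟨fun _ => false, fun i y hi hy heq hIoo =>
          absurd ⟨i, y, hi, hy, heq, hIoo⟩ h⟩
    choose f hf using hfex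
    refine ⟨f, fun η hη => ?_⟩
    have hpos : #{i | i < κ.ord ∧ ∃ y ∈ Y i, ∀ j < α (i + 1), η j = y j} ≠ 0 := by
      rw [hY2 η hη]
      simp only [ne_eq, Cardinal.lift_eq_zero]
      exact (aleph0_pos.trans_le hκ.le).ne'
    obtain ⟨⟨i, hmem⟩⟩ := Cardinal.mk_ne_zero_iff.1 hpos
    obtain ⟨hi, y, hy, hagree⟩ := hmem
    obtain ⟨heX, heIoo⟩ := (he i hi).1 y hy
    refine Set.mem_biUnion heX ?_
    have hval : f (e i y) = y := hf (e i y) i y hi hy rfl heIoo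
    simp only [cyl, Set.mem_setOf_eq, hval]
    intro m hm
    exact hagree m (hm.trans heIoo.2)

end
end

section
/- Let $\kappa = \mu^+ = \kappa^{<\kappa}$ be uncountable and suppose the dominating number of $({}^{\kappa}\kappa, <^*_{\kappa})$ is strictly greater than $\kappa^+$. Then every subset $A \subseteq {}^{\kappa}2$ of cardinality $\kappa^+$ has strong measure zero; in particular the generalized Borel conjecture fails. -/
open Cardinal Set

noncomputable section

private lemma smz_aux (κ μ : Cardinal.{0}) (hμ : κ = Order.succ μ)
    (hκ : ℵ₀ < κ) (hpow : κ ^< κ = κ)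
    (hd : ∀ G : Set (Ordinal.{0} → Ordinal.{0}), (∀ f ∈ G, IntoKappa κ f) →
      #G ≤ Cardinal.lift.{1} (Order.succ κ) → ¬ DominatingFam κ G)
    (A : Set (Ordinal.{0} → Bool)) (hA : #A ≤ Cardinal.lift.{1} (Order.succ κ)) :
    SMZ κ A := by
  classical
  intro X hX hXcard
  -- basic cardinal facts
  have hμ0 : ℵ₀ ≤ μ := by
    rw [hμ] at hκ; exact Order.lt_succ_iff.mp hκ
  have hμκ : μ < κ := by rw [hμ]; exact Order.lt_succ μ
  have hcard : ∀ {i : Ordinal.{0}}, i < κ.ord → i.card ≤ μ := by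
    intro i hi
    have h1 := Cardinal.lt_ord.mp hi
    rw [hμ] at h1
    exact Order.lt_succ_iff.mp h1
  have hμord0 : (0 : Ordinal.{0}) < μ.ord := by
    rw [Cardinal.lt_ord]
    simpa using aleph0_pos.trans_le hμ0
  have hyb : ∀ {i j : Ordinal.{0}}, i < κ.ord → j < μ.ord → μ.ord * i + j < κ.ord := by
    intro i j hi hj
    rw [Cardinal.lt_ord]
    have h1 : (μ.ord * i + j).card = μ * i.card + j.card := by
      rw [Ordinal.card_add, Ordinal.card_mul, Cardinal.card_ord]
    rw [h1]
    calc μ * i.card + j.card ≤ μ * μ + μ :=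
          add_le_add (mul_le_mul_right (hcard hi) μ) (Cardinal.lt_ord.mp hj).le
      _ = μ := by rw [Cardinal.mul_eq_self hμ0, Cardinal.add_eq_self hμ0]
      _ < κ := hμκ
  have hdecomp : ∀ {i i' j j' : Ordinal.{0}}, j < μ.ord → j' < μ.ord →
      μ.ord * i + j = μ.ord * i' + j' → i = i' ∧ j = j' := by
    intro i i' j j' hj hj' h
    have hne : μ.ord ≠ 0 := hμord0.ne'
    have hii : i = i' := by
      have e1 := Ordinal.mul_add_div i hne j
      have e2 := Ordinal.mul_add_div i' hne j'
      rw [Ordinal.div_eq_zero_of_lt hj, add_zero] at e1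
      rw [Ordinal.div_eq_zero_of_lt hj', add_zero] at e2
      rw [← e1, ← e2, h]
    subst hii
    exact ⟨rfl, add_left_cancel h⟩
  have hmkK : #(Set.Iio κ.ord) = Cardinal.lift.{1} κ := by
    rw [Ordinal.mk_Iio_ordinal, Cardinal.card_ord]
  have hmkM : #(Set.Iio μ.ord) = Cardinal.lift.{1} μ := by
    rw [Ordinal.mk_Iio_ordinal, Cardinal.card_ord]
  have hIic : ∀ {t : Ordinal.{0}}, t < κ.ord → #(Set.Iic t) ≤ Cardinal.lift.{1} μ := by
    intro t ht
    have h1 : Set.Iic t = Set.Iio (t + 1) := by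
      ext z
      rw [Set.mem_Iic, Set.mem_Iio, ← Order.succ_eq_add_one, Order.lt_succ_iff]
    rw [h1, Ordinal.mk_Iio_ordinal, Cardinal.lift_le, Ordinal.card_add, Ordinal.card_one]
    calc t.card + 1 ≤ μ + μ := add_le_add (hcard ht) (one_le_aleph0.trans hμ0)
      _ = μ := Cardinal.add_eq_self hμ0
  -- an injective enumeration of X
  obtain ⟨E⟩ : Nonempty (Set.Iio κ.ord ≃ X) := Cardinal.eq.mp (hmkK.trans hXcard.symm)
  set e : Ordinal.{0} → Ordinal.{0} :=
    fun y => if h : y < κ.ord then (E ⟨y, h⟩ : Ordinal.{0}) else 0 with he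
  have heX : ∀ {y}, y < κ.ord → e y ∈ X := by
    intro y hy
    rw [he]; simp only [hy, dif_pos]
    exact (E ⟨y, hy⟩).2
  have heinj : ∀ {y y'}, y < κ.ord → y' < κ.ord → e y = e y' → y = y' := by
    intro y y' hy hy' h
    rw [he] at h
    simp only [hy, hy', dif_pos] at h
    have h2 := E.injective (Subtype.ext h)
    exact congrArg Subtype.val h2
  -- the query points
  have hQex : ∀ i : Ordinal.{0}, ∃ Q, i < κ.ord →
      Q < κ.ord ∧ ∀ j < μ.ord, e (μ.ord * i + j) < Q := by
    intro i
    by_cases hi : i < κ.ord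
    · have hex : ∃ Q, Q < κ.ord ∧ ∀ j < μ.ord, e (μ.ord * i + j) < Q := by
        by_contra hcon
        push_neg at hcon
        have hsub : Set.Iio κ.ord ⊆ ⋃ j ∈ Set.Iio μ.ord, Set.Iic (e (μ.ord * i + j)) := by
          intro Qq hQq
          obtain ⟨j, hj, hle⟩ := hcon Qq hQq
          exact Set.mem_biUnion hj hle
        have h1 : Cardinal.lift.{1} κ ≤
            #(⋃ j ∈ Set.Iio μ.ord, Set.Iic (e (μ.ord * i + j))) := by
          rw [← hmkK]; exact Cardinal.mk_le_mk_of_subset hsub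
        have h2 := Cardinal.mk_biUnion_le
          (fun j : Ordinal.{0} => Set.Iic (e (μ.ord * i + j))) (Set.Iio μ.ord)
        haveI : Nonempty ↥(Set.Iio μ.ord) := ⟨⟨0, hμord0⟩⟩
        have h4 : (⨆ j : ↥(Set.Iio μ.ord), #(Set.Iic (e (μ.ord * i + j.1)))) ≤
            Cardinal.lift.{1} μ := by
          apply ciSup_le'
          intro j
          exact hIic (hX (heX (hyb hi j.2)))
        have h5 : Cardinal.lift.{1} κ ≤ Cardinal.lift.{1} μ := by
          calc Cardinal.lift.{1} κ ≤ _ := h1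
            _ ≤ #(Set.Iio μ.ord) * ⨆ j : ↥(Set.Iio μ.ord),
                #(Set.Iic (e (μ.ord * i + j.1))) := h2
            _ ≤ Cardinal.lift.{1} μ * Cardinal.lift.{1} μ := by
                rw [hmkM]; exact mul_le_mul_right h4 _
            _ = Cardinal.lift.{1} (μ * μ) := (Cardinal.lift_mul _ _).symm
            _ = Cardinal.lift.{1} μ := by rw [Cardinal.mul_eq_self hμ0]
        exact absurd (Cardinal.lift_le.mp h5) (not_le.mpr hμκ)
      exact ⟨hex.choose, fun _ => hex.choose_spec⟩
    · exact ⟨0, fun h => absurd h hi⟩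
  choose Q hQ using hQex
  -- coding of initial segments
  have hcodeex : ∀ i : Ordinal.{0}, ∃ c : (Ordinal.{0} → Bool) → Ordinal.{0}, i < κ.ord →
      (∀ ν, c ν < κ.ord) ∧ ∀ ν ν', c ν = c ν' → ∀ j < i, ν j = ν' j := by
    intro i
    by_cases hi : i < κ.ord
    · have hle : #(↥(Set.Iio i) → Bool) ≤ #(↥(Set.Iio κ.ord)) := by
        have h1 : #(↥(Set.Iio i) → Bool) = Cardinal.lift.{1} ((2 : Cardinal.{0}) ^ i.card) := by
          rw [Cardinal.mk_arrow, Cardinal.mk_bool, Cardinal.lift_id', Ordinal.mk_Iio_ordinal,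
            Cardinal.lift_power]
        have h2k : (2 : Cardinal.{0}) ≤ κ := by
          have h2a : (2 : Cardinal.{0}) < ℵ₀ := by exact_mod_cast Cardinal.nat_lt_aleph0 2
          exact h2a.le.trans hκ.le
        have h3 : (2 : Cardinal.{0}) ^ i.card ≤ κ :=
          calc (2 : Cardinal.{0}) ^ i.card ≤ κ ^ i.card := Cardinal.power_le_power_right h2k
            _ ≤ κ ^< κ := Cardinal.le_powerlt κ (Cardinal.lt_ord.mp hi)
            _ = κ := hpow
        rw [h1, hmkK]
        exact Cardinal.lift_le.mpr h3
      obtain ⟨emb⟩ := (Cardinal.le_def _ _).mp hle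
      refine ⟨fun ν => (emb fun j => ν j.1 : ↥(Set.Iio κ.ord)).1,
        fun _ => ⟨fun ν => (emb _).2, ?_⟩⟩
      intro ν ν' hc j hj
      have h1 : emb (fun j : ↥(Set.Iio i) => ν j.1) = emb (fun j : ↥(Set.Iio i) => ν' j.1) :=
        Subtype.ext hc
      exact congrFun (emb.injective h1) ⟨j, hj⟩
    · exact ⟨fun _ => 0, fun h => absurd h hi⟩
  choose code hcode using hcodeex
  -- the family of coded elements of A
  set hfun : (Ordinal.{0} → Bool) → Ordinal.{0} → Ordinal.{0} :=
    fun η i => if h : i < κ.ord then code (Q i) η else 0 with hhfun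
  have hfunInto : ∀ η, IntoKappa κ (hfun η) := by
    intro η i hi
    rw [hhfun]; simp only [hi, dif_pos]
    exact (hcode (Q i) (hQ i hi).1).1 η
  have hGcard : #(hfun '' A) ≤ Cardinal.lift.{1} (Order.succ κ) :=
    le_trans Cardinal.mk_image_le hA
  have hGInto : ∀ f ∈ hfun '' A, IntoKappa κ f := by
    rintro f ⟨η, -, rfl⟩; exact hfunInto η
  have hnd := hd (hfun '' A) hGInto hGcard
  rw [DominatingFam] at hnd
  push_neg at hnd
  obtain ⟨g, hgInto, hgnd⟩ := hnd
  -- every η ∈ A has a hit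
  have hhit : ∀ η ∈ A, ∃ i, i < κ.ord ∧ hfun η i ≤ g i := by
    intro η hη
    by_contra hc
    push_neg at hc
    apply hgnd (hfun η) ⟨η, hη, rfl⟩
    rw [LtStar, LtStarOn]
    have hemp : {i : Ordinal.{0} | i ∈ Set.Iio κ.ord ∧ hfun η i ≤ g i} = ∅ := by
      ext i
      simp only [Set.mem_setOf_eq, Set.mem_empty_iff_false, iff_false, not_and, Set.mem_Iio]
      intro hi
      exact (hc i hi).not_ge
    rw [hemp, Cardinal.mk_emptyCollection]
    have h0 : (0 : Cardinal.{0}) < κ := lt_of_lt_of_le Cardinal.aleph0_pos hκ.le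
    have h1 : Cardinal.lift.{1} (0 : Cardinal.{0}) < Cardinal.lift.{1} κ :=
      Cardinal.lift_lt.mpr h0
    simpa using h1
  -- injections of Iic (g i) into Iio μ.ord
  have hιex : ∀ i : Ordinal.{0}, ∃ c : Ordinal.{0} → Ordinal.{0}, i < κ.ord →
      (∀ v ≤ g i, c v < μ.ord) ∧ ∀ v ≤ g i, ∀ v' ≤ g i, c v = c v' → v = v' := by
    intro i
    by_cases hi : i < κ.ord
    · have hle : #(Set.Iic (g i)) ≤ #(Set.Iio μ.ord) := by
        rw [hmkM]; exact hIic (hgInto i hi)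
      obtain ⟨emb⟩ := (Cardinal.le_def _ _).mp hle
      refine ⟨fun v => if hv : v ≤ g i then (emb ⟨v, hv⟩ : ↥(Set.Iio μ.ord)).1 else 0,
        fun _ => ⟨?_, ?_⟩⟩
      · intro v hv
        simp only [hv, dif_pos]
        exact (emb ⟨v, hv⟩).2
      · intro v hv v' hv' hc
        simp only [hv, hv', dif_pos] at hc
        have h2 := emb.injective (Subtype.ext hc)
        exact congrArg Subtype.val h2
    · exact ⟨fun _ => 0, fun h => absurd h hi⟩
  choose ι hι using hιex
  -- the covering function
  refine ⟨fun ζ => if h : ∃ η', η' ∈ A ∧ ∃ i, i < κ.ord ∧ hfun η' i ≤ g i ∧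
      ζ = e (μ.ord * i + ι i (hfun η' i)) then h.choose else fun _ => false, ?_⟩
  intro η hη
  obtain ⟨i, hi, hle⟩ := hhit η hη
  have hji : ι i (hfun η i) < μ.ord := (hι i hi).1 _ hle
  have hyκ : μ.ord * i + ι i (hfun η i) < κ.ord := hyb hi hji
  have hPζ : ∃ η', η' ∈ A ∧ ∃ i', i' < κ.ord ∧ hfun η' i' ≤ g i' ∧
      e (μ.ord * i + ι i (hfun η i)) = e (μ.ord * i' + ι i' (hfun η' i')) :=
    ⟨η, hη, i, hi, hle, rfl⟩
  simp only [Set.mem_iUnion]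
  refine ⟨e (μ.ord * i + ι i (hfun η i)), heX hyκ, ?_⟩
  simp only [cyl, Set.mem_setOf_eq]
  intro k hk
  rw [dif_pos hPζ]
  obtain ⟨hη₀A, i₀, hi₀, hle₀, hζ₀⟩ := hPζ.choose_spec
  have hj₀ : ι i₀ (hfun hPζ.choose i₀) < μ.ord := (hι i₀ hi₀).1 _ hle₀
  have hy₀κ : μ.ord * i₀ + ι i₀ (hfun hPζ.choose i₀) < κ.ord := hyb hi₀ hj₀
  obtain ⟨hii, hjj⟩ := hdecomp hji hj₀ (heinj hyκ hy₀κ hζ₀)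
  subst hii
  have hveq : hfun η i = hfun hPζ.choose i :=
    (hι i hi).2 _ hle _ hle₀ hjj
  have hfeq : ∀ ν : Ordinal.{0} → Bool, hfun ν i = code (Q i) ν := by
    intro ν
    rw [hhfun]
    simp only [hi, dif_pos]
  have hcodes : code (Q i) η = code (Q i) hPζ.choose := by
    rw [← hfeq η, ← hfeq hPζ.choose]
    exact hveq
  have hζQ : e (μ.ord * i + ι i (hfun η i)) < Q i := (hQ i hi).2 _ hji
  exact (hcode (Q i) (hQ i hi).1).2 η hPζ.choose hcodes k (hk.trans hζQ)

/-- if `κ = μ⁺ = κ^{<κ}` and the dominating number of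
`(^κκ, <*_κ)` is `> κ⁺` (no family of size `≤ κ⁺` is dominating), then every
`A ⊆ ^κ2` of cardinality `κ⁺` has strong measure zero; in particular the
generalized Borel conjecture fails. -/
theorem gbc_fails_of_d_large (κ μ : Cardinal.{0}) (hμ : κ = Order.succ μ)
    (hκ : ℵ₀ < κ) (hpow : κ ^< κ = κ)
    (hd : ∀ G : Set (Ordinal.{0} → Ordinal.{0}), (∀ f ∈ G, IntoKappa κ f) →
      #G ≤ Cardinal.lift.{1} (Order.succ κ) → ¬ DominatingFam κ G) :
    (∀ A : Set (Ordinal.{0} → Bool),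
      #A = Cardinal.lift.{1} (Order.succ κ) → SMZ κ A) ∧
    ∃ A : Set (Ordinal.{0} → Bool),
      #A = Cardinal.lift.{1} (Order.succ κ) ∧ SMZ κ A := by
  have main : ∀ A : Set (Ordinal.{0} → Bool),
      #A ≤ Cardinal.lift.{1} (Order.succ κ) → SMZ κ A :=
    smz_aux κ μ hμ hκ hpow hd
  constructor
  · intro A hA
    exact main A hA.le
  · refine ⟨(fun i : Ordinal.{0} => fun j : Ordinal.{0} => decide (j < i)) ''
      Set.Iio (Order.succ κ).ord, ?_, ?_⟩
    · have hinj : Set.InjOn (fun i : Ordinal.{0} => fun j : Ordinal.{0} => decide (j < i))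
          (Set.Iio (Order.succ κ).ord) := by
        intro a _ b _ hab
        by_contra hne
        rcases lt_or_gt_of_ne hne with h | h
        · have h2 := congrFun hab a
          simp only [decide_eq_decide] at h2
          exact lt_irrefl a (h2.mpr h)
        · have h2 := congrFun hab b
          simp only [decide_eq_decide] at h2
          exact lt_irrefl b (h2.mp h)
      rw [Cardinal.mk_image_eq_of_injOn _ _ hinj, Ordinal.mk_Iio_ordinal, Cardinal.card_ord]
    · apply main
      exact le_of_eq (by
        have hinj : Set.InjOn (fun i : Ordinal.{0} => fun j : Ordinal.{0} => decide (j < i))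
            (Set.Iio (Order.succ κ).ord) := by
          intro a _ b _ hab
          by_contra hne
          rcases lt_or_gt_of_ne hne with h | h
          · have h2 := congrFun hab a
            simp only [decide_eq_decide] at h2
            exact lt_irrefl a (h2.mpr h)
          · have h2 := congrFun hab b
            simp only [decide_eq_decide] at h2
            exact lt_irrefl b (h2.mp h)
        rw [Cardinal.mk_image_eq_of_injOn _ _ hinj, Ordinal.mk_Iio_ordinal, Cardinal.card_ord])


end
end

section
/- Let $\kappa = \mu^+ = \kappa^{<\kappa}$ with injections $F_i : {}^{i}2 \to \kappa$, and let $\mathcal{F} \subseteq {}^{\kappa}\kappa$ be a dominating family with respect to $<^*_{\kappa}$. If $X \subseteq \kappa$ has size $\kappa$ and contains no limit ordinals, and for each $f \in \mathcal{F}$ one chooses $\eta_f \in {}^{\kappa}2$ with $f \upharpoonright X <^*_{\kappa} (\overline{F} \circ \eta_f) \upharpoonright X$, then the set $A = \{\eta_f : f \in \mathcal{F}\}$ does not have strong measure zero. -/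
open Cardinal Set

noncomputable section

/-- if `G` is a dominating family, `X ⊆ κ` has size `κ` and
contains no limit ordinals, and for each `f ∈ G` one picks `η_f ∈ ^κ2` with
`f ↾ X <*_κ (F ∘ η_f) ↾ X`, then `A = {η_f : f ∈ G}` is not strong measure zero. -/
theorem dominating_family_not_smz (κ μ : Cardinal.{0}) (hμ : κ = Order.succ μ)
    (hκ : ℵ₀ < κ) (hpow : κ ^< κ = κ)
    (F : Ordinal.{0} → (Ordinal.{0} → Bool) → Ordinal.{0}) (hF : CodingOK κ F)
    (G : Set (Ordinal.{0} → Ordinal.{0})) (hGin : ∀ f ∈ G, IntoKappa κ f)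
    (hGdom : DominatingFam κ G)
    (X : Set Ordinal.{0}) (hXsub : X ⊆ Set.Iio κ.ord)
    (hXcard : #X = Cardinal.lift.{1} κ) (hXnolim : ∀ i ∈ X, ¬ Order.IsSuccLimit i)
    (η : (Ordinal.{0} → Ordinal.{0}) → (Ordinal.{0} → Bool))
    (hη : ∀ f ∈ G, LtStarOn κ X f (fun i => F i (η f))) :
    ¬ SMZ κ (η '' G) := by
  intro hsmz
  classical
  have hκ0 : ℵ₀ ≤ κ := hκ.le
  have hlim : Order.IsSuccLimit κ.ord := Cardinal.isSuccLimit_ord hκ0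
  have hIio : #(Set.Iio κ.ord) = Cardinal.lift.{1} κ := by
    rw [Ordinal.mk_Iio_ordinal, Cardinal.card_ord]
  -- an equiv between pairs and X
  have hcard : #(↥(Set.Iio κ.ord) × ↥(Set.Iio κ.ord)) = #↥X := by
    rw [Cardinal.mk_prod, hIio, hXcard, Cardinal.lift_lift,
      Cardinal.mul_eq_self (Cardinal.aleph0_le_lift.mpr hκ0)]
  obtain ⟨e⟩ := Cardinal.eq.mp hcard
  set Xp : ↥(Set.Iio κ.ord) → Set Ordinal.{0} :=
    fun a => Set.range (fun b => (e (a, b)).val) with hXp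
  have hXpsub : ∀ a, Xp a ⊆ X := by
    rintro a i ⟨b, rfl⟩
    exact (e (a, b)).2
  have hXpuniq : ∀ a a' i, i ∈ Xp a → i ∈ Xp a' → a = a' := by
    rintro a a' i ⟨b, hb⟩ ⟨b', hb'⟩
    have : e (a, b) = e (a', b') := Subtype.ext (hb.trans hb'.symm)
    exact (Prod.mk.injEq .. ▸ (e.injective this)).1
  have hXpcard : ∀ a, #(Xp a) = Cardinal.lift.{1} κ := by
    intro a
    have hinj : Function.Injective (fun b => (e (a, b)).val) := by
      intro b b' hbb
      have : e (a, b) = e (a, b') := Subtype.ext hbb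
      exact (Prod.mk.injEq .. ▸ (e.injective this)).2
    rw [hXp]
    rw [Cardinal.mk_range_eq _ hinj, hIio]
  -- covers from SMZ
  have hcov : ∀ a, ∃ f : Ordinal.{0} → (Ordinal.{0} → Bool),
      (η '' G) ⊆ ⋃ ξ ∈ Xp a, cyl ξ (f ξ) := fun a =>
    hsmz (Xp a) (fun i hi => hXsub (hXpsub a hi)) (hXpcard a)
  choose fa hfa using hcov
  -- the function h
  set h : Ordinal.{0} → Ordinal.{0} :=
    fun i => if hi : ∃ a, i ∈ Xp a then F i (fa hi.choose i) + 1 else 0 with hh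
  have hinto : IntoKappa κ h := by
    intro i hi
    rw [hh]
    by_cases hex : ∃ a, i ∈ Xp a
    · simp only [hex, dif_pos]
      rw [Ordinal.add_one_eq_succ]
      exact hlim.succ_lt (hF.1 i hi _)
    · simp only [hex, dif_neg, not_false_iff]
      exact hlim.pos
  obtain ⟨f₀, hf₀G, hdom⟩ := hGdom h hinto
  have h2 := hη f₀ hf₀G
  -- for each a pick ξ ∈ Xp a with η f₀ in the cylinder
  have hpick : ∀ a, ∃ ξ, ξ ∈ Xp a ∧ η f₀ ∈ cyl ξ (fa a ξ) := by
    intro a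
    have : η f₀ ∈ ⋃ ξ ∈ Xp a, cyl ξ (fa a ξ) := hfa a ⟨f₀, hf₀G, rfl⟩
    simpa using this
  choose t ht1 ht2 using hpick
  have htval : ∀ a, F (t a) (η f₀) ≤ h (t a) := by
    intro a
    have hex : ∃ a', t a ∈ Xp a' := ⟨a, ht1 a⟩
    have hch : hex.choose = a := hXpuniq _ _ _ hex.choose_spec (ht1 a)
    have heq : F (t a) (η f₀) = F (t a) (fa a (t a)) :=
      hF.2.1 (t a) _ _ (ht2 a)
    rw [hh]
    simp only [hex, dif_pos, hch]
    rw [heq]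
    exact le_self_add
  have htinj : Function.Injective t := fun a a' haa =>
    hXpuniq a a' (t a) (ht1 a) (haa ▸ ht1 a')
  -- the big set S and small sets
  set S : Set Ordinal.{0} := {i | i ∈ X ∧ F i (η f₀) ≤ h i} with hS
  have hrange : Set.range t ⊆ S := by
    rintro i ⟨a, rfl⟩
    exact ⟨hXpsub a (ht1 a), htval a⟩
  have hSbig : Cardinal.lift.{1} κ ≤ #S := by
    calc Cardinal.lift.{1} κ = #(Set.Iio κ.ord) := hIio.symm
    _ = #(Set.range t) := (Cardinal.mk_range_eq t htinj).symm
    _ ≤ #S := Cardinal.mk_le_mk_of_subset hrange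
  have hSsub : S ⊆ {i | i ∈ Set.Iio κ.ord ∧ f₀ i ≤ h i} ∪
      {i | i ∈ X ∧ F i (η f₀) ≤ f₀ i} := by
    rintro i ⟨hiX, hile⟩
    by_cases hc : F i (η f₀) ≤ f₀ i
    · exact Or.inr ⟨hiX, hc⟩
    · exact Or.inl ⟨hXsub hiX, ((lt_of_not_ge hc).le.trans hile)⟩
  have hSsmall : #S < Cardinal.lift.{1} κ := by
    calc #S ≤ #({i | i ∈ Set.Iio κ.ord ∧ f₀ i ≤ h i} ∪
        {i | i ∈ X ∧ F i (η f₀) ≤ f₀ i} : Set Ordinal.{0}) :=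
          Cardinal.mk_le_mk_of_subset hSsub
    _ ≤ _ + _ := Cardinal.mk_union_le _ _
    _ < Cardinal.lift.{1} κ := by
        refine Cardinal.add_lt_of_lt ?_ hdom h2
        rw [Cardinal.aleph0_le_lift]
        exact hκ0
  exact absurd hSbig (not_le.mpr hSsmall)

end
end
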